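/- arXiv:1808.05430 — 3 statements merged into one kernel-verified Lean document; each statement's English description precedes it below -/
import Mathlib

section
/- For all x with |x| small, the generating function F_{132}(x,q) = Σ_{n≥0} Σ_{σ ∈ S_n(312,132)} x^n q^{L(σ)} equals (1-x)/(1-x-xq). Equivalently, for all n ≥ 1 and 1 ≤ k ≤ n, the number of permutations in S_n(312,132) whose longest increasing subsequence has length exactly k equals the binomial coefficient C(n-1, k-1). -/
abbrev Avoids312 {n : ℕ} (σ : Equiv.Perm (Fin n)) : Prop :=
  ¬ ∃ i j k : Fin n, i < j ∧ j < k ∧ σ j < σ k ∧ σ k < σ i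

abbrev Avoids21 {n : ℕ} (σ : Equiv.Perm (Fin n)) : Prop :=
  ¬ ∃ i j : Fin n, i < j ∧ σ j < σ i

abbrev Avoids123 {n : ℕ} (σ : Equiv.Perm (Fin n)) : Prop :=
  ¬ ∃ i j k : Fin n, i < j ∧ j < k ∧ σ i < σ j ∧ σ j < σ k

abbrev Avoids132 {n : ℕ} (σ : Equiv.Perm (Fin n)) : Prop :=
  ¬ ∃ i j k : Fin n, i < j ∧ j < k ∧ σ i < σ k ∧ σ k < σ j

abbrev Avoids213 {n : ℕ} (σ : Equiv.Perm (Fin n)) : Prop :=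
  ¬ ∃ i j k : Fin n, i < j ∧ j < k ∧ σ j < σ i ∧ σ i < σ k

abbrev Avoids231 {n : ℕ} (σ : Equiv.Perm (Fin n)) : Prop :=
  ¬ ∃ i j k : Fin n, i < j ∧ j < k ∧ σ k < σ i ∧ σ i < σ j

abbrev Avoids321 {n : ℕ} (σ : Equiv.Perm (Fin n)) : Prop :=
  ¬ ∃ i j k : Fin n, i < j ∧ j < k ∧ σ k < σ j ∧ σ j < σ i

abbrev Avoids1234 {n : ℕ} (σ : Equiv.Perm (Fin n)) : Prop :=
  ¬ ∃ i j k l : Fin n, i < j ∧ j < k ∧ k < l ∧ σ i < σ j ∧ σ j < σ k ∧ σ k < σ l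

abbrev Avoids1243 {n : ℕ} (σ : Equiv.Perm (Fin n)) : Prop :=
  ¬ ∃ i j k l : Fin n, i < j ∧ j < k ∧ k < l ∧ σ i < σ j ∧ σ j < σ l ∧ σ l < σ k

abbrev AvoidsIncr {n : ℕ} (m : ℕ) (σ : Equiv.Perm (Fin n)) : Prop :=
  ¬ ∃ f : Fin m → Fin n,
      (∀ i j : Fin m, i < j → f i < f j) ∧ (∀ i j : Fin m, i < j → σ (f i) < σ (f j))

/-- Length of the longest increasing subsequence of a permutation of `{1,…,n}`. -/
def lis {n : ℕ} (σ : Equiv.Perm (Fin n)) : ℕ :=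
  Nat.findGreatest (fun k => ∃ f : Fin k → Fin n,
    (∀ i j : Fin k, i < j → f i < f j) ∧ (∀ i j : Fin k, i < j → σ (f i) < σ (f j))) n


open Finset

namespace Stmt12

variable {n : ℕ}

/-- The set of left-to-right maxima (records) of `σ`. -/
def Mset (σ : Equiv.Perm (Fin n)) : Finset (Fin n) :=
  univ.filter (fun i => ∀ j, j < i → σ j < σ i)

lemma mem_Mset {σ : Equiv.Perm (Fin n)} {i : Fin n} :
    i ∈ Mset σ ↔ ∀ j, j < i → σ j < σ i := by simp [Mset]

lemma record_of_avoid {σ : Equiv.Perm (Fin n)} (h1 : Avoids312 σ) (h2 : Avoids132 σ)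
    {i : Fin n} (hi : i ∉ Mset σ) : ∀ j, j < i → σ i < σ j := by
  rw [mem_Mset] at hi
  push_neg at hi
  obtain ⟨j1, hj1, hv1⟩ := hi
  have hij1 : σ i < σ j1 :=
    lt_of_le_of_ne hv1 (fun h => (ne_of_lt hj1) (σ.injective h.symm))
  intro j hj
  by_contra hv
  push_neg at hv
  have hji : σ j < σ i :=
    lt_of_le_of_ne hv (fun h => (ne_of_lt hj) (σ.injective h))
  rcases lt_trichotomy j j1 with h | h | h
  · exact h2 ⟨j, j1, i, h, hj1, hji, hij1⟩
  · exact absurd (h ▸ hji) (not_lt.2 hij1.le)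
  · exact h1 ⟨j1, j, i, h, hj, hji, hij1⟩

lemma avoid_of_rec {σ : Equiv.Perm (Fin n)}
    (h : ∀ i : Fin n, (∀ j, j < i → σ j < σ i) ∨ (∀ j, j < i → σ i < σ j)) :
    Avoids312 σ ∧ Avoids132 σ := by
  constructor
  · rintro ⟨i, j, k, hij, hjk, h1, h2⟩
    rcases h k with hk | hk
    · exact absurd (hk i (hij.trans hjk)) (not_lt.2 h2.le)
    · exact absurd (hk j hjk) (not_lt.2 h1.le)
  · rintro ⟨i, j, k, hij, hjk, h1, h2⟩
    rcases h k with hk | hk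
    · exact absurd (hk j hjk) (not_lt.2 h2.le)
    · exact absurd (hk i (hij.trans hjk)) (not_lt.2 h1.le)

lemma card_lt_filter (σ : Equiv.Perm (Fin n)) (i : Fin n) :
    (univ.filter (fun l => σ l < σ i)).card = (σ i : ℕ) := by
  have him : univ.filter (fun l => σ l < σ i)
      = (univ.filter (fun v => v < σ i)).image σ.symm := by
    ext l
    simp only [mem_filter, mem_univ, true_and, mem_image]
    constructor
    · intro h; exact ⟨σ l, h, σ.symm_apply_apply l⟩
    · rintro ⟨v, hv, rfl⟩; simpa using hv
  rw [him, Finset.card_image_of_injective _ σ.symm.injective]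
  have : univ.filter (fun v => v < σ i) = Finset.Iio (σ i) := by
    ext v; simp
  rw [this, Fin.card_Iio]

lemma card_gt_filter (σ : Equiv.Perm (Fin n)) (i : Fin n) :
    (univ.filter (fun l => σ i < σ l)).card = n - 1 - (σ i : ℕ) := by
  have hsum : (univ.filter (fun l => σ l < σ i)).card
      + (univ.filter (fun l => ¬ σ l < σ i)).card = n := by
    rw [Finset.card_filter_add_card_filter_not]; simp
  have hins : univ.filter (fun l => ¬ σ l < σ i)
      = insert i (univ.filter (fun l => σ i < σ l)) := by
    ext l
    simp only [mem_filter, mem_univ, true_and, mem_insert, not_lt]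
    constructor
    · intro h
      rcases eq_or_ne l i with rfl | hne
      · exact Or.inl rfl
      · exact Or.inr (lt_of_le_of_ne h (fun hh => hne (σ.injective hh.symm)))
    · rintro (rfl | h)
      · exact le_refl _
      · exact h.le
  have hni : i ∉ univ.filter (fun l => σ i < σ l) := by simp
  rw [hins, Finset.card_insert_of_notMem hni] at hsum
  rw [card_lt_filter] at hsum
  have := (σ i).isLt
  omega

lemma filter_gt_eq {σ : Equiv.Perm (Fin n)} (h1 : Avoids312 σ) (h2 : Avoids132 σ)
    {i : Fin n} (hi : i ∈ Mset σ) :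
    univ.filter (fun l => σ i < σ l) = univ.filter (fun l => i < l ∧ l ∈ Mset σ) := by
  ext l
  simp only [mem_filter, mem_univ, true_and]
  constructor
  · intro hlt
    have hne : l ≠ i := fun h => absurd (h ▸ hlt) (lt_irrefl _)
    have hil : i < l := by
      rcases lt_trichotomy l i with h | h | h
      · exact absurd (mem_Mset.1 hi l h) (not_lt.2 hlt.le)
      · exact absurd h hne
      · exact h
    refine ⟨hil, ?_⟩
    by_contra hl
    exact absurd (record_of_avoid h1 h2 hl i hil) (not_lt.2 hlt.le)
  · rintro ⟨hil, hl⟩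
    exact mem_Mset.1 hl i hil

lemma filter_lt_eq {σ : Equiv.Perm (Fin n)} (h1 : Avoids312 σ) (h2 : Avoids132 σ)
    {i : Fin n} (hi : i ∉ Mset σ) :
    univ.filter (fun l => σ l < σ i) = univ.filter (fun l => i < l ∧ l ∉ Mset σ) := by
  ext l
  simp only [mem_filter, mem_univ, true_and]
  constructor
  · intro hlt
    have hne : l ≠ i := fun h => absurd (h ▸ hlt) (lt_irrefl _)
    have hil : i < l := by
      rcases lt_trichotomy l i with h | h | h
      · exact absurd (record_of_avoid h1 h2 hi l h) (not_lt.2 hlt.le)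
      · exact absurd h hne
      · exact h
    refine ⟨hil, ?_⟩
    intro hl
    exact absurd (mem_Mset.1 hl i hil) (not_lt.2 hlt.le)
  · rintro ⟨hil, hl⟩
    exact record_of_avoid h1 h2 hl i hil

/-- counting functions -/
def cA (S : Finset (Fin n)) (i : Fin n) : ℕ := (univ.filter (fun l => i < l ∧ l ∈ S)).card
def cB (S : Finset (Fin n)) (i : Fin n) : ℕ := (univ.filter (fun l => i < l ∧ l ∉ S)).card

lemma val_of_mem {σ : Equiv.Perm (Fin n)} (h1 : Avoids312 σ) (h2 : Avoids132 σ)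
    {i : Fin n} (hi : i ∈ Mset σ) : (σ i : ℕ) = n - 1 - cA (Mset σ) i := by
  have := card_gt_filter σ i
  rw [filter_gt_eq h1 h2 hi] at this
  have h2' := (σ i).isLt
  unfold cA
  omega

lemma val_of_not_mem {σ : Equiv.Perm (Fin n)} (h1 : Avoids312 σ) (h2 : Avoids132 σ)
    {i : Fin n} (hi : i ∉ Mset σ) : (σ i : ℕ) = cB (Mset σ) i := by
  have := card_lt_filter σ i
  rw [filter_lt_eq h1 h2 hi] at this
  unfold cB
  omega

lemma perm_eq_of_Mset_eq {σ τ : Equiv.Perm (Fin n)}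
    (hσ1 : Avoids312 σ) (hσ2 : Avoids132 σ) (hτ1 : Avoids312 τ) (hτ2 : Avoids132 τ)
    (h : Mset σ = Mset τ) : σ = τ := by
  apply Equiv.ext
  intro i
  apply Fin.ext
  by_cases hi : i ∈ Mset σ
  · rw [val_of_mem hσ1 hσ2 hi, val_of_mem hτ1 hτ2 (h ▸ hi), h]
  · rw [val_of_not_mem hσ1 hσ2 hi, val_of_not_mem hτ1 hτ2 (h ▸ hi), h]



section Construct

set_option linter.unusedSectionVars false
variable (S : Finset (Fin n)) [NeZero n]

lemma cA_lt {i : Fin n} (hi : i ∈ S) : cA S i + 1 ≤ S.card := by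
  have hins : insert i (univ.filter (fun l => i < l ∧ l ∈ S)) ⊆ S := by
    intro l hl
    rcases Finset.mem_insert.1 hl with rfl | hl
    · exact hi
    · exact ((Finset.mem_filter.1 hl).2).2
  have hni : i ∉ univ.filter (fun l => i < l ∧ l ∈ S) := by simp
  have := Finset.card_le_card hins
  rw [Finset.card_insert_of_notMem hni] at this
  unfold cA; omega

lemma cB_lt {i : Fin n} (hi : i ∉ S) : cB S i + 1 ≤ n - S.card := by
  have hins : insert i (univ.filter (fun l => i < l ∧ l ∉ S)) ⊆ univ \ S := by
    intro l hl
    rcases Finset.mem_insert.1 hl with rfl | hl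
    · simp [hi]
    · simp [((Finset.mem_filter.1 hl).2).2]
  have hni : i ∉ univ.filter (fun l => i < l ∧ l ∉ S) := by simp
  have := Finset.card_le_card hins
  rw [Finset.card_insert_of_notMem hni, Finset.card_sdiff_of_subset (Finset.subset_univ S)] at this
  unfold cB
  simpa using this

lemma cA_le (i : Fin n) : cA S i + 1 ≤ n := by
  have hni : i ∉ univ.filter (fun l => i < l ∧ l ∈ S) := by simp
  have : univ.filter (fun l => i < l ∧ l ∈ S) ⊆ univ.erase i := by
    intro l hl; simp only [Finset.mem_erase, Finset.mem_univ, and_true]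
    intro h; subst h; exact hni hl
  have := Finset.card_le_card this
  rw [Finset.card_erase_of_mem (Finset.mem_univ i)] at this
  have hn := Fin.pos i
  unfold cA
  simp only [Finset.card_univ, Fintype.card_fin] at this
  omega

lemma cA_mono {i j : Fin n} (hij : i < j) (hj : j ∈ S) : cA S j + 1 ≤ cA S i := by
  have hins : insert j (univ.filter (fun l => j < l ∧ l ∈ S))
      ⊆ univ.filter (fun l => i < l ∧ l ∈ S) := by
    intro l hl
    rcases Finset.mem_insert.1 hl with rfl | hl
    · simp [hij, hj]
    · obtain ⟨-, h1, h2⟩ := Finset.mem_filter.1 hl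
      simp [hij.trans h1, h2]
  have hni : j ∉ univ.filter (fun l => j < l ∧ l ∈ S) := by simp
  have := Finset.card_le_card hins
  rw [Finset.card_insert_of_notMem hni] at this
  unfold cA; omega

lemma cB_mono {i j : Fin n} (hij : i < j) (hj : j ∉ S) : cB S j + 1 ≤ cB S i := by
  have hins : insert j (univ.filter (fun l => j < l ∧ l ∉ S))
      ⊆ univ.filter (fun l => i < l ∧ l ∉ S) := by
    intro l hl
    rcases Finset.mem_insert.1 hl with rfl | hl
    · simp [hij, hj]
    · obtain ⟨-, h1, h2⟩ := Finset.mem_filter.1 hl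
      simp [hij.trans h1, h2]
  have hni : j ∉ univ.filter (fun l => j < l ∧ l ∉ S) := by simp
  have := Finset.card_le_card hins
  rw [Finset.card_insert_of_notMem hni] at this
  unfold cB; omega

/-- the value of the permutation constructed from the record set `S` -/
def gv (i : Fin n) : ℕ := if i ∈ S then n - 1 - cA S i else cB S i

lemma Scard_le : S.card ≤ n := by
  have := Finset.card_le_card (Finset.subset_univ S)
  simpa using this

lemma gv_ge_of_mem {i : Fin n} (hi : i ∈ S) : n - S.card ≤ gv S i := by
  have h1 := cA_lt S hi
  have h2 := Scard_le S
  unfold gv; rw [if_pos hi]; omega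

lemma gv_lt_of_not_mem {i : Fin n} (hi : i ∉ S) : gv S i < n - S.card := by
  have h1 := cB_lt S hi
  unfold gv; rw [if_neg hi]; omega

lemma gv_lt_n (h0 : (0 : Fin n) ∈ S) (i : Fin n) : gv S i < n := by
  by_cases hi : i ∈ S
  · have h1 := cA_lt S hi
    have := Fin.pos i
    unfold gv; rw [if_pos hi]; omega
  · have h1 := gv_lt_of_not_mem S hi
    omega

lemma gv_rec_max {i j : Fin n} (hi : i ∈ S) (hj : j < i) : gv S j < gv S i := by
  by_cases hjS : j ∈ S
  · have h1 := cA_mono S hj hi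
    have h2 := cA_lt S hi
    have h3 := Scard_le S
    have h4 := cA_le S j
    unfold gv; rw [if_pos hi, if_pos hjS]; omega
  · exact lt_of_lt_of_le (gv_lt_of_not_mem S hjS) (gv_ge_of_mem S hi)

lemma gv_rec_min {i j : Fin n} (hi : i ∉ S) (hj : j < i) : gv S i < gv S j := by
  by_cases hjS : j ∈ S
  · exact lt_of_lt_of_le (gv_lt_of_not_mem S hi) (gv_ge_of_mem S hjS)
  · have h1 := cB_mono S hj hi
    unfold gv; rw [if_neg hi, if_neg hjS]; omega

lemma exists_perm (h0 : (0 : Fin n) ∈ S) :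
    ∃ σ : Equiv.Perm (Fin n), Avoids312 σ ∧ Avoids132 σ ∧ Mset σ = S := by
  set g : Fin n → Fin n := fun i => ⟨gv S i, gv_lt_n S h0 i⟩ with hg
  have hginj : Function.Injective g := by
    intro a b hab
    have hv : gv S a = gv S b := congrArg Fin.val hab
    rcases lt_trichotomy a b with h | h | h
    · by_cases hb : b ∈ S
      · exact absurd hv (ne_of_lt (gv_rec_max S hb h))
      · exact absurd hv (ne_of_gt (gv_rec_min S hb h))
    · exact h
    · by_cases ha : a ∈ S
      · exact absurd hv (ne_of_gt (gv_rec_max S ha h))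
      · exact absurd hv (ne_of_lt (gv_rec_min S ha h))
  set σ : Equiv.Perm (Fin n) :=
    Equiv.ofBijective g ((Fintype.bijective_iff_injective_and_card g).2 ⟨hginj, rfl⟩) with hσ
  have hσapp : ∀ i, σ i = g i := fun i => rfl
  have hrec : ∀ i : Fin n, (∀ j, j < i → σ j < σ i) ∨ (∀ j, j < i → σ i < σ j) := by
    intro i
    by_cases hi : i ∈ S
    · left; intro j hj
      rw [hσapp, hσapp]
      exact gv_rec_max S hi hj
    · right; intro j hj
      rw [hσapp, hσapp]
      exact gv_rec_min S hi hj
  obtain ⟨ha1, ha2⟩ := avoid_of_rec hrec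
  refine ⟨σ, ha1, ha2, ?_⟩
  ext i
  rw [mem_Mset]
  constructor
  · intro hi
    by_contra hiS
    have hne : i ≠ 0 := fun h => hiS (h ▸ h0)
    have h0i : (0 : Fin n) < i := by
      rw [Fin.lt_def]
      have hv : i.val ≠ 0 := fun h => hne (Fin.ext (by simp [h]))
      simp only [Fin.val_zero]
      omega
    have h1 : gv S i < gv S 0 :=
      lt_of_lt_of_le (gv_lt_of_not_mem S hiS) (gv_ge_of_mem S h0)
    have h2 : gv S 0 < gv S i := hi 0 h0i
    omega
  · intro hi j hj
    rw [hσapp, hσapp]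
    exact gv_rec_max S hi hj

end Construct

lemma lis_eq_card_Mset (hn : 0 < n) {σ : Equiv.Perm (Fin n)}
    (h1 : Avoids312 σ) (h2 : Avoids132 σ) : lis σ = (Mset σ).card := by
  haveI : NeZero n := ⟨by omega⟩
  have h0 : (0 : Fin n) ∈ Mset σ := by
    rw [mem_Mset]
    intro j hj
    rw [Fin.lt_def] at hj
    simp at hj
  set m := (Mset σ).card with hm
  have hm1 : 1 ≤ m := Finset.card_pos.2 ⟨0, h0⟩
  unfold lis
  rw [Nat.findGreatest_eq_iff]
  refine ⟨?_, ?_, ?_⟩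
  · calc m ≤ (univ : Finset (Fin n)).card := Finset.card_le_card (Finset.subset_univ _)
      _ = n := by simp
  · intro _
    refine ⟨fun t => ((Mset σ).orderIsoOfFin hm.symm t : Fin n), ?_, ?_⟩
    · intro i j hij
      exact Subtype.coe_lt_coe.2 (((Mset σ).orderIsoOfFin hm.symm).lt_iff_lt.2 hij)
    · intro i j hij
      have hlt : ((Mset σ).orderIsoOfFin hm.symm i : Fin n)
          < ((Mset σ).orderIsoOfFin hm.symm j : Fin n) :=
        Subtype.coe_lt_coe.2 (((Mset σ).orderIsoOfFin hm.symm).lt_iff_lt.2 hij)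
      exact mem_Mset.1 ((Mset σ).orderIsoOfFin hm.symm j).2 _ hlt
  · rintro j hmj hjn ⟨f, hf1, hf2⟩
    have hj0 : 0 < j := lt_of_le_of_lt (Nat.zero_le m) hmj
    set ι : Fin j → Fin n := fun t => if t.val = 0 then 0 else f t with hι
    have hmem : ∀ t : Fin j, ι t ∈ Mset σ := by
      intro t
      by_cases ht : t.val = 0
      · simp [hι, ht, h0]
      · simp only [hι, if_neg ht]
        by_contra hre
        have hjj : t.val - 1 < j := by omega
        have hprev : (⟨t.val - 1, hjj⟩ : Fin j) < t := by
          rw [Fin.lt_def]; simp only []; omega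
        have := record_of_avoid h1 h2 hre (f ⟨t.val - 1, hjj⟩) (hf1 _ _ hprev)
        exact absurd (hf2 _ _ hprev) (not_lt.2 this.le)
    have hinj : Set.InjOn ι ((univ : Finset (Fin j)) : Set (Fin j)) := by
      intro a _ b _ hab
      simp only [hι] at hab
      have hfne : ∀ c : Fin j, c.val ≠ 0 → f c ≠ 0 := by
        intro c hc hfc
        have hc0 : (⟨0, hj0⟩ : Fin j) < c := by
          rw [Fin.lt_def]; simpa using Nat.pos_of_ne_zero hc
        have := hf1 _ _ hc0
        rw [hfc, Fin.lt_def] at this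
        simp at this
      by_cases haz : a.val = 0 <;> by_cases hbz : b.val = 0
      · exact Fin.ext (by omega)
      · rw [if_pos haz, if_neg hbz] at hab
        exact absurd hab.symm (hfne b hbz)
      · rw [if_neg haz, if_pos hbz] at hab
        exact absurd hab (hfne a haz)
      · rw [if_neg haz, if_neg hbz] at hab
        rcases lt_trichotomy a b with h | h | h
        · exact absurd hab (ne_of_lt (hf1 _ _ h))
        · exact h
        · exact absurd hab (ne_of_gt (hf1 _ _ h))
    have hle := Finset.card_le_card_of_injOn ι (fun t _ => hmem t) hinj
    simp only [Finset.card_univ, Fintype.card_fin] at hle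
    omega

end Stmt12

/-- for `n ≥ 1` and `1 ≤ k ≤ n`, the number of permutations in
`S_n(312,132)` with longest increasing subsequence length exactly `k` is `C(n-1,k-1)`. -/
theorem stmt_12 (n : ℕ) (hn : 1 ≤ n) (k : ℕ) (hk1 : 1 ≤ k) (hk2 : k ≤ n) :
    (Finset.univ.filter
        (fun σ : Equiv.Perm (Fin n) => Avoids312 σ ∧ Avoids132 σ ∧ lis σ = k)).card
      = Nat.choose (n - 1) (k - 1) := by
  classical
  haveI : NeZero n := ⟨by omega⟩
  have hcard : ((((Finset.univ : Finset (Fin n)).erase 0).powersetCard (k-1)).card)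
      = (n-1).choose (k-1) := by
    rw [Finset.card_powersetCard, Finset.card_erase_of_mem (Finset.mem_univ _),
      Finset.card_univ, Fintype.card_fin]
  rw [← hcard]
  have h0M : ∀ σ : Equiv.Perm (Fin n), (0 : Fin n) ∈ Stmt12.Mset σ := by
    intro σ
    rw [Stmt12.mem_Mset]
    intro j hj
    rw [Fin.lt_def] at hj
    simp at hj
  apply Finset.card_bij (fun σ _ => (Stmt12.Mset σ).erase 0)
  · intro σ hσ
    obtain ⟨-, ha1, ha2, hl⟩ := Finset.mem_filter.1 hσ
    rw [Finset.mem_powersetCard]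
    constructor
    · exact Finset.erase_subset_erase _ (Finset.subset_univ _)
    · rw [Finset.card_erase_of_mem (h0M σ), ← Stmt12.lis_eq_card_Mset hn ha1 ha2, hl]
  · intro σ hσ τ hτ hst
    obtain ⟨-, hσ1, hσ2, -⟩ := Finset.mem_filter.1 hσ
    obtain ⟨-, hτ1, hτ2, -⟩ := Finset.mem_filter.1 hτ
    have : Stmt12.Mset σ = Stmt12.Mset τ := by
      rw [← Finset.insert_erase (h0M σ), ← Finset.insert_erase (h0M τ), hst]
    exact Stmt12.perm_eq_of_Mset_eq hσ1 hσ2 hτ1 hτ2 this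
  · intro T hT
    rw [Finset.mem_powersetCard] at hT
    obtain ⟨hT1, hT2⟩ := hT
    have h0T : (0 : Fin n) ∉ T := by
      intro h
      exact absurd (hT1 h) (by simp)
    obtain ⟨σ, hσ1, hσ2, hσM⟩ := Stmt12.exists_perm (insert (0 : Fin n) T)
      (Finset.mem_insert_self _ _)
    have hcardS : (insert (0 : Fin n) T).card = k := by
      rw [Finset.card_insert_of_notMem h0T, hT2]
      omega
    refine ⟨σ, ?_, ?_⟩
    · simp only [Finset.mem_filter, Finset.mem_univ, true_and]
      exact ⟨hσ1, hσ2, by rw [Stmt12.lis_eq_card_Mset hn hσ1 hσ2, hσM, hcardS]⟩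
    · rw [hσM, Finset.erase_insert h0T]
end

section
/- For every n ≥ 1, the sum over all permutations σ in S_n(312,1234) of L(σ) equals (n⁴-4n³+9n²-6n+4)/4; equivalently the expected longest increasing subsequence length on S_n(312,1234) equals 3(n⁴-4n³+9n²-6n+4)/(n⁴-4n³+11n²-8n+12). -/
namespace Stmt15

variable {n : ℕ}

/-- value of σ at natural position i (0 outside range) -/
def pv (σ : Equiv.Perm (Fin n)) (i : ℕ) : ℕ :=
  if h : i < n then (σ ⟨i, h⟩ : ℕ) else 0

lemma pv_lt (σ : Equiv.Perm (Fin n)) {i : ℕ} (h : i < n) : pv σ i < n := by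
  simp [pv, h]

lemma pv_inj (σ : Equiv.Perm (Fin n)) {i j : ℕ} (hi : i < n) (hj : j < n)
    (h : pv σ i = pv σ j) : i = j := by
  simp only [pv, dif_pos hi, dif_pos hj] at h
  have := σ.injective (Fin.val_injective h)
  simpa using congrArg Fin.val this

lemma pv_surj (σ : Equiv.Perm (Fin n)) {v : ℕ} (hv : v < n) :
    ∃ i, i < n ∧ pv σ i = v := by
  refine ⟨(σ.symm ⟨v, hv⟩ : Fin n), (σ.symm ⟨v, hv⟩).2, ?_⟩
  simp [pv, (σ.symm ⟨v, hv⟩).2]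

/-- ascent set as naturals -/
def ascN (σ : Equiv.Perm (Fin n)) : Finset ℕ :=
  (Finset.range (n-1)).filter fun i => pv σ i < pv σ (i+1)

lemma mem_ascN {σ : Equiv.Perm (Fin n)} {i : ℕ} :
    i ∈ ascN σ ↔ i + 1 < n ∧ pv σ i < pv σ (i+1) := by
  simp only [ascN, Finset.mem_filter, Finset.mem_range]
  omega

/-- 312-avoidance in ℕ-form -/
def Av312N (σ : Equiv.Perm (Fin n)) : Prop :=
  ∀ i j k, i < j → j < k → k < n → pv σ j < pv σ k → pv σ k < pv σ i → False

lemma av312N_of {σ : Equiv.Perm (Fin n)} (h : Avoids312 σ) : Av312N σ := by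
  intro i j k hij hjk hk h1 h2
  have hi : i < n := by omega
  have hj : j < n := by omega
  simp only [pv, dif_pos hi, dif_pos hj, dif_pos hk] at h1 h2
  exact h ⟨⟨i, hi⟩, ⟨j, hj⟩, ⟨k, hk⟩, Fin.mk_lt_mk.mpr hij, Fin.mk_lt_mk.mpr hjk,
    Fin.lt_def.mpr h1, Fin.lt_def.mpr h2⟩

lemma desc_of_not_asc {σ : Equiv.Perm (Fin n)} {t : ℕ} (h1 : t + 1 < n)
    (h : t ∉ ascN σ) : pv σ (t+1) < pv σ t := by
  rw [mem_ascN] at h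
  have hne : pv σ t ≠ pv σ (t+1) := fun he => by
    have := pv_inj σ (by omega) h1 he; omega
  omega

/-- strictly decreasing along consecutive descents -/
lemma decr_run {f : ℕ → ℕ} {l r : ℕ} (h : ∀ t, l ≤ t → t < r → f (t+1) < f t)
    {s t : ℕ} (hs : l ≤ s) (hst : s < t) (ht : t ≤ r) : f t < f s := by
  induction t, hst using Nat.le_induction with
  | base => exact h s hs (by omega)
  | succ t hst ih => exact lt_trans (h t (by omega) (by omega)) (ih (by omega))

/-- gap lemma: a value strictly between a descent pair occurs earlier -/
lemma gap {σ : Equiv.Perm (Fin n)} (hσ : Av312N σ) {t v : ℕ} (h1 : t + 1 < n)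
    (hv1 : pv σ (t+1) < v) (hv2 : v < pv σ t) : ∃ p, p < t ∧ pv σ p = v := by
  have hvn : v < n := lt_trans hv2 (pv_lt σ (by omega))
  obtain ⟨p, hp, hpv⟩ := pv_surj σ hvn
  have hpt : p ≠ t := fun he => by subst he; omega
  have hpt1 : p ≠ t + 1 := fun he => by subst he; omega
  rcases lt_or_gt_of_ne hpt with h' | h'
  · exact ⟨p, h', hpv⟩
  · exact absurd (hσ t (t+1) p (by omega) (by omega) hp (by omega) (by omega)) id

/-- first run is a value interval going down -/
lemma run1_formula {σ : Equiv.Perm (Fin n)} (hσ : Av312N σ) {i1 : ℕ} (h1 : i1 < n)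
    (hd : ∀ t, t < i1 → pv σ (t+1) < pv σ t) :
    ∀ t, t ≤ i1 → pv σ t = pv σ i1 + (i1 - t) := by
  suffices H : ∀ d t, t + d = i1 → pv σ t = pv σ i1 + d by
    intro t ht; have := H (i1 - t) t (by omega); omega
  intro d
  induction d with
  | zero => intro t ht; simp [show t = i1 by omega]
  | succ d ih =>
    intro t ht
    have ih' := ih (t+1) (by omega)
    have hdt := hd t (by omega)
    by_cases he : pv σ t = pv σ (t+1) + 1
    · omega
    · exfalso
      obtain ⟨p, hp, hpv⟩ := gap hσ (t := t) (v := pv σ (t+1) + 1) (by omega) (by omega) (by omega)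
      have : pv σ t < pv σ p := decr_run (f := pv σ) (l := 0) (r := i1)
        (fun u hu hu' => hd u hu') (by omega) hp (by omega)
      omega

/-- uniqueness of a decreasing run with given image -/
lemma run_uniq {f g : ℕ → ℕ} :
    ∀ (N l : ℕ), (∀ t, l ≤ t → t < l + N → f (t+1) < f t) →
    (∀ t, l ≤ t → t < l + N → g (t+1) < g t) →
    (Finset.Icc l (l+N)).image f = (Finset.Icc l (l+N)).image g →
    ∀ t, l ≤ t → t ≤ l + N → f t = g t := by
  intro N
  induction N with
  | zero =>
    intro l _ _ him t ht ht'
    have : t = l := by omega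
    subst this
    simpa using him
  | succ N ih =>
    intro l hf hg him t ht ht'
    -- f l = g l (both are the max of the common image)
    have hfl : f l = g l := by
      have h1 : f l ∈ (Finset.Icc l (l+(N+1))).image g := by
        rw [← him]; exact Finset.mem_image_of_mem f (by simp only [Finset.mem_Icc]; omega)
      have h2 : g l ∈ (Finset.Icc l (l+(N+1))).image f := by
        rw [him]; exact Finset.mem_image_of_mem g (by simp only [Finset.mem_Icc]; omega)
      obtain ⟨u, hu, hufu⟩ := Finset.mem_image.mp h1
      obtain ⟨w, hw, hwgw⟩ := Finset.mem_image.mp h2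
      simp only [Finset.mem_Icc] at hu hw
      have hu2 : g u ≤ g l := by
        rcases eq_or_lt_of_le hu.1 with h | h
        · rw [h]
        · exact le_of_lt (decr_run hg le_rfl h hu.2)
      have hw2 : f w ≤ f l := by
        rcases eq_or_lt_of_le hw.1 with h | h
        · rw [h]
        · exact le_of_lt (decr_run hf le_rfl h hw.2)
      omega
    rcases eq_or_lt_of_le ht with h | h
    · rw [← h]; exact hfl
    -- pass to the tail
    have him' : (Finset.Icc (l+1) (l+1+N)).image f = (Finset.Icc (l+1) (l+1+N)).image g := by
      ext v
      constructor
      · intro hv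
        obtain ⟨u, hu, huv⟩ := Finset.mem_image.mp hv
        simp only [Finset.mem_Icc] at hu
        have : v ∈ (Finset.Icc l (l+(N+1))).image g := by
          rw [← him]; exact Finset.mem_image.mpr ⟨u, by simp only [Finset.mem_Icc]; omega, huv⟩
        obtain ⟨w, hw, hwv⟩ := Finset.mem_image.mp this
        simp only [Finset.mem_Icc] at hw
        rcases eq_or_lt_of_le hw.1 with h' | h'
        · exfalso
          rw [← h'] at hwv
          have : f u < f l := decr_run hf le_rfl (by omega) (by omega)
          omega
        · exact Finset.mem_image.mpr ⟨w, by simp only [Finset.mem_Icc]; omega, hwv⟩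
      · intro hv
        obtain ⟨u, hu, huv⟩ := Finset.mem_image.mp hv
        simp only [Finset.mem_Icc] at hu
        have : v ∈ (Finset.Icc l (l+(N+1))).image f := by
          rw [him]; exact Finset.mem_image.mpr ⟨u, by simp only [Finset.mem_Icc]; omega, huv⟩
        obtain ⟨w, hw, hwv⟩ := Finset.mem_image.mp this
        simp only [Finset.mem_Icc] at hw
        rcases eq_or_lt_of_le hw.1 with h' | h'
        · exfalso
          rw [← h'] at hwv
          have : g u < g l := decr_run hg le_rfl (by omega) (by omega)
          omega
        · exact Finset.mem_image.mpr ⟨w, by simp only [Finset.mem_Icc]; omega, hwv⟩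
    exact ih (l+1) (fun u hu hu' => hf u (by omega) (by omega))
      (fun u hu hu' => hg u (by omega) (by omega)) him' t (by omega) (by omega)

/-- values taken after position s are exactly the complement of values up to s -/
lemma image_tail (σ : Equiv.Perm (Fin n)) {s : ℕ} (hs : s < n) (hn : 1 ≤ n) :
    (Finset.Icc (s+1) (n-1)).image (pv σ) =
    (Finset.range n) \ ((Finset.Icc 0 s).image (pv σ)) := by
  ext v
  simp only [Finset.mem_image, Finset.mem_sdiff, Finset.mem_range, Finset.mem_Icc]
  constructor
  · rintro ⟨t, ht, rfl⟩
    refine ⟨pv_lt σ (by omega), ?_⟩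
    rintro ⟨u, hu, huv⟩
    have := pv_inj σ (by omega) (by omega) huv
    omega
  · rintro ⟨hv, hnot⟩
    obtain ⟨p, hp, hpv⟩ := pv_surj σ hv
    refine ⟨p, ⟨?_, by omega⟩, hpv⟩
    by_contra h
    exact hnot ⟨p, ⟨by omega, by omega⟩, hpv⟩


lemma pv_coe (σ : Equiv.Perm (Fin n)) (x : Fin n) : pv σ (x : ℕ) = σ x := by
  simp [pv, x.2]

lemma lis_zero_ok (σ : Equiv.Perm (Fin n)) :
    ∃ f : Fin 0 → Fin n,
      (∀ i j : Fin 0, i < j → f i < f j) ∧ (∀ i j : Fin 0, i < j → σ (f i) < σ (f j)) :=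
  ⟨fun x => x.elim0, fun i => i.elim0, fun i => i.elim0⟩

lemma lis_spec (σ : Equiv.Perm (Fin n)) :
    ∃ f : Fin (lis σ) → Fin n,
      (∀ i j, i < j → f i < f j) ∧ (∀ i j, i < j → σ (f i) < σ (f j)) := by
  unfold lis
  exact Nat.findGreatest_spec (P := fun k => ∃ f : Fin k → Fin n,
    (∀ i j : Fin k, i < j → f i < f j) ∧ (∀ i j : Fin k, i < j → σ (f i) < σ (f j)))
    (Nat.zero_le n) (lis_zero_ok σ)

lemma exists_asc {σ : Equiv.Perm (Fin n)} {p q : ℕ} (hq : q < n) (hpq : p < q)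
    (hv : pv σ p < pv σ q) : ∃ u, p ≤ u ∧ u < q ∧ u ∈ ascN σ := by
  by_contra h
  push_neg at h
  have hd : ∀ t, p ≤ t → t < q → pv σ (t+1) < pv σ t := by
    intro t ht ht'
    exact desc_of_not_asc (by omega) (fun hm => by
      have := h t ht ht'; exact absurd hm this)
  have := decr_run hd (le_refl p) hpq (le_refl q)
  omega

/-- upper bound : lis ≤ #ascents + 1 -/
lemma lis_le (σ : Equiv.Perm (Fin n)) : lis σ ≤ (ascN σ).card + 1 := by
  have hspec := lis_spec σ
  set k := lis σ with hk
  clear_value k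
  obtain ⟨f, hmono, hval⟩ := hspec
  rcases Nat.lt_or_ge k 2 with h1 | h2
  · omega
  -- positions as naturals
  set p : ℕ → ℕ := fun t => if h : t < k then (f ⟨t, h⟩ : ℕ) else 0 with hp
  have hpn : ∀ t, t < k → p t < n := by
    intro t ht; simp only [hp, dif_pos ht]; exact (f ⟨t, ht⟩).2
  have hpmono : ∀ s t, s < t → t < k → p s < p t := by
    intro s t hst ht
    simp only [hp, dif_pos ht, dif_pos (lt_trans hst ht)]
    exact hmono ⟨s, lt_trans hst ht⟩ ⟨t, ht⟩ (Fin.mk_lt_mk.mpr hst)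
  have hpval : ∀ s t, s < t → t < k → pv σ (p s) < pv σ (p t) := by
    intro s t hst ht
    simp only [hp, dif_pos ht, dif_pos (lt_trans hst ht), pv_coe]
    exact hval ⟨s, lt_trans hst ht⟩ ⟨t, ht⟩ (Fin.mk_lt_mk.mpr hst)
  have hex : ∀ t, t < k - 1 → ∃ u, p t ≤ u ∧ u < p (t+1) ∧ u ∈ ascN σ := by
    intro t ht
    exact exists_asc (hpn (t+1) (by omega)) (hpmono t (t+1) (by omega) (by omega))
      (hpval t (t+1) (by omega) (by omega))
  choose g hg1 hg2 hg3 using hex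
  have hcard : (Finset.range (k-1)).card ≤ (ascN σ).card := by
    apply Finset.card_le_card_of_injOn (fun t => if h : t < k - 1 then g t h else 0)
    · intro a ha
      simp only [Finset.mem_coe, Finset.mem_range] at ha
      simp only [dif_pos ha]
      exact hg3 a ha
    · intro a ha b hb hab
      simp only [Finset.coe_range, Set.mem_Iio] at ha hb
      simp only [dif_pos ha, dif_pos hb] at hab
      by_contra hne
      rcases lt_or_gt_of_ne hne with h | h
      · have h1 : p (a+1) ≤ p b := by
          rcases eq_or_lt_of_le (by omega : a + 1 ≤ b) with he | hl
          · rw [he]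
          · exact le_of_lt (hpmono _ _ hl (by omega))
        have := hg1 a ha; have := hg2 a ha; have := hg1 b hb; have := hg2 b hb
        omega
      · have h1 : p (b+1) ≤ p a := by
          rcases eq_or_lt_of_le (by omega : b + 1 ≤ a) with he | hl
          · rw [he]
          · exact le_of_lt (hpmono _ _ hl (by omega))
        have := hg1 a ha; have := hg2 a ha; have := hg1 b hb; have := hg2 b hb
        omega
  rw [Finset.card_range] at hcard
  omega

/-- in a 312-avoider, run tops increase: key value claim -/
lemma runtops {σ : Equiv.Perm (Fin n)} (hσ : Av312N σ) {p q : ℕ}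
    (hp : p ∈ insert 0 ((ascN σ).image (· + 1))) (hq : q ∈ insert 0 ((ascN σ).image (· + 1)))
    (hpq : p < q) : pv σ p < pv σ q := by
  simp only [Finset.mem_insert, Finset.mem_image] at hp hq
  rcases hq with rfl | ⟨j, hj, rfl⟩
  · omega
  rw [mem_ascN] at hj
  have hpj : p ≤ j := by omega
  rcases eq_or_lt_of_le hpj with rfl | hlt
  · exact hj.2
  · -- p < j
    by_contra hc
    push_neg at hc
    have hne : pv σ (j+1) ≠ pv σ p := by
      intro he
      have hpn : p < n := by omega
      have := pv_inj σ (by omega) hpn he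
      omega
    exact hσ p j (j+1) hlt (by omega) hj.1 hj.2 (by omega)

/-- lower bound : #ascents + 1 ≤ lis for 312-avoiders -/
lemma lis_ge {σ : Equiv.Perm (Fin n)} (hn : 1 ≤ n) (hσ : Av312N σ) :
    (ascN σ).card + 1 ≤ lis σ := by
  classical
  set F : Finset ℕ := insert 0 ((ascN σ).image (· + 1)) with hF
  have h0 : 0 ∉ (ascN σ).image (· + 1) := by
    simp only [Finset.mem_image]
    rintro ⟨j, _, hj⟩; omega
  have hcardF : F.card = (ascN σ).card + 1 := by
    rw [hF, Finset.card_insert_of_notMem h0,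
      Finset.card_image_of_injective _ (fun a b h => by omega)]
  have hFlt : ∀ x ∈ F, x < n := by
    intro x hx
    simp only [hF, Finset.mem_insert, Finset.mem_image] at hx
    rcases hx with rfl | ⟨j, hj, rfl⟩
    · omega
    · rw [mem_ascN] at hj; omega
  have hFn : F.card ≤ n := by
    have : F ⊆ Finset.range n := fun x hx => Finset.mem_range.mpr (hFlt x hx)
    simpa using Finset.card_le_card this
  set e := F.orderIsoOfFin (rfl : F.card = F.card) with he
  refine le_trans (le_of_eq hcardF.symm) ?_
  apply Nat.le_findGreatest hFn
  refine ⟨fun t => ⟨(e t : ℕ), hFlt _ (e t).2⟩, ?_, ?_⟩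
  · intro i j hij
    exact Fin.mk_lt_mk.mpr (e.strictMono hij)
  · intro i j hij
    have h1 : (e i : ℕ) < (e j : ℕ) := e.strictMono hij
    have := runtops hσ (e i).2 (e j).2 h1
    rw [pv, pv] at this
    simp only [dif_pos (hFlt _ (e i).2), dif_pos (hFlt _ (e j).2)] at this
    exact this

lemma lis_eq {σ : Equiv.Perm (Fin n)} (hn : 1 ≤ n) (hσ : Av312N σ) :
    lis σ = (ascN σ).card + 1 :=
  le_antisymm (lis_le σ) (lis_ge hn hσ)

/-- Avoids1234 iff lis ≤ 3 -/
lemma avoids1234_iff (σ : Equiv.Perm (Fin n)) : Avoids1234 σ ↔ lis σ ≤ 3 := by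
  constructor
  · intro h
    by_contra hc
    push_neg at hc
    obtain ⟨f, hmono, hval⟩ := lis_spec σ
    have h4 : 4 ≤ lis σ := hc
    have h0 : (0:ℕ) < lis σ := by omega
    refine h ⟨f ⟨0, by omega⟩, f ⟨1, by omega⟩, f ⟨2, by omega⟩, f ⟨3, by omega⟩,
      hmono _ _ (Fin.mk_lt_mk.mpr (by omega)), hmono _ _ (Fin.mk_lt_mk.mpr (by omega)),
      hmono _ _ (Fin.mk_lt_mk.mpr (by omega)), hval _ _ (Fin.mk_lt_mk.mpr (by omega)),
      hval _ _ (Fin.mk_lt_mk.mpr (by omega)), hval _ _ (Fin.mk_lt_mk.mpr (by omega))⟩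
  · intro h hpat
    obtain ⟨i, j, k, l, hij, hjk, hkl, v1, v2, v3⟩ := hpat
    have hn4 : 4 ≤ n := by
      have : (i:ℕ) < j := hij
      have : (j:ℕ) < k := hjk
      have : (k:ℕ) < l := hkl
      have := l.2
      omega
    set g : Fin 4 → Fin n := fun t => if t = 0 then i else if t = 1 then j else if t = 2 then k else l with hg
    have hmono : ∀ s t : Fin 4, s < t → g s < g t := by
      intro s t hst
      fin_cases s <;> fin_cases t <;>
        first
          | exact absurd hst (by decide)
          | (norm_num [hg]
             first
               | exact hij | exact hjk | exact hkl
               | exact lt_trans hij hjk | exact lt_trans hjk hkl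
               | exact lt_trans hij (lt_trans hjk hkl))
    have hval : ∀ s t : Fin 4, s < t → σ (g s) < σ (g t) := by
      intro s t hst
      fin_cases s <;> fin_cases t <;>
        first
          | exact absurd hst (by decide)
          | (norm_num [hg]
             first
               | exact v1 | exact v2 | exact v3
               | exact lt_trans v1 v2 | exact lt_trans v2 v3
               | exact lt_trans v1 (lt_trans v2 v3))
    have h4 : 4 ≤ lis σ := by
      unfold lis
      exact Nat.le_findGreatest (P := fun m => ∃ f : Fin m → Fin n,
        (∀ i j : Fin m, i < j → f i < f j) ∧ (∀ i j : Fin m, i < j → σ (f i) < σ (f j)))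
        hn4 ⟨g, hmono, hval⟩
    omega

/-- build a permutation from an ℕ-function -/
noncomputable def mkPerm (f : ℕ → ℕ) (hb : ∀ i, i < n → f i < n)
    (hinj : ∀ i j, i < n → j < n → f i = f j → i = j) : Equiv.Perm (Fin n) :=
  Equiv.ofBijective (fun i => ⟨f i, hb i i.2⟩)
    (Finite.injective_iff_bijective.mp
      (fun i j h => Fin.ext (hinj i j i.2 j.2 (congrArg Fin.val h))))

lemma pv_mkPerm (f : ℕ → ℕ) (hb : ∀ i, i < n → f i < n)
    (hinj : ∀ i j, i < n → j < n → f i = f j → i = j) {i : ℕ} (hi : i < n) :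
    pv (mkPerm f hb hinj) i = f i := by
  simp [pv, mkPerm, Equiv.ofBijective, hi]

lemma perm_ext {σ τ : Equiv.Perm (Fin n)} (h : ∀ i, i < n → pv σ i = pv τ i) : σ = τ := by
  apply Equiv.ext
  intro i
  apply Fin.ext
  have := h i i.2
  simpa [pv, i.2] using this

/-- steps of descents accumulate -/
lemma desc_step {σ : Equiv.Perm (Fin n)} {l r : ℕ}
    (h : ∀ t, l ≤ t → t < r → pv σ (t+1) < pv σ t) :
    ∀ d t, l ≤ t → t + d ≤ r → pv σ t ≥ pv σ (t+d) + d := by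
  intro d
  induction d with
  | zero => intro t _ _; simp
  | succ d ih =>
    intro t ht htd
    have h1 := h t ht (by omega)
    have h2 := ih (t+1) (by omega) (by omega)
    have : t + 1 + d = t + (d+1) := by omega
    rw [this] at h2
    omega

/-- a permutation with no ascents is n-1-· -/
lemma asc0_eq {σ : Equiv.Perm (Fin n)} (hn : 1 ≤ n) (hcard : (ascN σ).card = 0) :
    ∀ i, i < n → pv σ i = n - 1 - i := by
  have hempty : ascN σ = ∅ := Finset.card_eq_zero.mp hcard
  have hd : ∀ t, 0 ≤ t → t < n - 1 → pv σ (t+1) < pv σ t := by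
    intro t _ ht
    apply desc_of_not_asc (by omega)
    simp [hempty]
  intro i hi
  have h1 := desc_step hd (n-1-i) i (by omega) (by omega)
  have h2 := desc_step hd i 0 (by omega) (by omega)
  have h3 := pv_lt σ (show 0 < n by omega)
  have h4 := pv_lt σ hi
  simp at h2
  omega

noncomputable def revP (hn : 1 ≤ n) : Equiv.Perm (Fin n) :=
  mkPerm (fun i => n - 1 - i) (fun i hi => by show n - 1 - i < n; omega)
    (fun i j hi hj h => by omega)

lemma card_asc0 (hn : 1 ≤ n) :
    (Finset.univ.filter (fun σ : Equiv.Perm (Fin n) =>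
      Avoids312 σ ∧ (ascN σ).card = 0)).card = 1 := by
  classical
  rw [Finset.card_eq_one]
  refine ⟨revP hn, ?_⟩
  rw [Finset.eq_singleton_iff_unique_mem]
  constructor
  · simp only [Finset.mem_filter, Finset.mem_univ, true_and]
    constructor
    · rintro ⟨i, j, k, hij, hjk, h1, h2⟩
      have e1 : pv (revP hn) j = n - 1 - j := pv_mkPerm _ _ _ j.2
      have e2 : pv (revP hn) k = n - 1 - k := pv_mkPerm _ _ _ k.2
      rw [pv, dif_pos j.2] at e1
      rw [pv, dif_pos k.2] at e2
      have hv1 : ((revP hn) j : ℕ) < ((revP hn) k : ℕ) := h1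
      have hlt : (j:ℕ) < k := hjk
      simp only [Fin.eta] at e1 e2
      omega
    · rw [Finset.card_eq_zero]
      ext i
      simp only [mem_ascN, Finset.notMem_empty, iff_false, not_and]
      intro hi
      have e1 : pv (revP hn) i = n - 1 - i := pv_mkPerm _ _ _ (by omega)
      have e2 : pv (revP hn) (i+1) = n - 1 - (i+1) := pv_mkPerm _ _ _ hi
      omega
  · intro σ hσ
    simp only [Finset.mem_filter, Finset.mem_univ, true_and] at hσ
    apply perm_ext
    intro i hi
    rw [asc0_eq hn hσ.2 i hi, revP, pv_mkPerm _ _ _ hi]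

lemma val_mkPerm (f : ℕ → ℕ) (hb : ∀ i, i < n → f i < n)
    (hinj : ∀ i j, i < n → j < n → f i = f j → i = j) (x : Fin n) :
    ((mkPerm f hb hinj) x : ℕ) = f x := rfl

lemma avoids312_mk {f : ℕ → ℕ} {hb : ∀ i, i < n → f i < n}
    {hinj : ∀ i j, i < n → j < n → f i = f j → i = j}
    (h : ∀ i j k, i < j → j < k → k < n → f j < f k → f k < f i → False) :
    Avoids312 (mkPerm f hb hinj) := by
  rintro ⟨i, j, k, hij, hjk, h1, h2⟩
  rw [Fin.lt_def, val_mkPerm, val_mkPerm] at h1 h2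
  exact h i j k hij hjk k.2 h1 h2

/-- facts about a 312-avoider with a single ascent i1 -/
lemma asc1_facts {σ : Equiv.Perm (Fin n)} (hσ : Av312N σ) {i1 : ℕ} (hasc : ascN σ = {i1}) :
    i1 + 1 < n ∧ (∀ t, t ≤ i1 → pv σ t = pv σ i1 + (i1 - t)) ∧ pv σ 0 + 1 < n := by
  have h1 : i1 ∈ ascN σ := by rw [hasc]; exact Finset.mem_singleton_self i1
  rw [mem_ascN] at h1
  have hdesc : ∀ t, t + 1 < n → t ≠ i1 → pv σ (t+1) < pv σ t := by
    intro t ht hne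
    exact desc_of_not_asc ht (by rw [hasc]; simpa using hne)
  have hrun1 : ∀ t, t ≤ i1 → pv σ t = pv σ i1 + (i1 - t) :=
    run1_formula hσ (by omega) (fun t ht => hdesc t (by omega) (by omega))
  refine ⟨h1.1, hrun1, ?_⟩
  by_contra hc
  push_neg at hc
  have h0n : pv σ 0 < n := pv_lt σ (by omega)
  have h0 : pv σ 0 = n - 1 := by omega
  have ha0 := hrun1 0 (by omega)
  set a := pv σ i1 with ha
  have hv := h1.2
  have hvn : pv σ (i1+1) < n := pv_lt σ h1.1
  -- the value pv σ (i1+1) also appears in run 1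
  set t := i1 - (pv σ (i1+1) - a) with hht
  have htle : t ≤ i1 := by omega
  have := hrun1 t htle
  have : pv σ t = pv σ (i1+1) := by omega
  have := pv_inj σ (by omega) h1.1 this
  omega

lemma run1_image {σ : Equiv.Perm (Fin n)} {i1 : ℕ} (hi1 : i1 < n)
    (hrun1 : ∀ t, t ≤ i1 → pv σ t = pv σ i1 + (i1 - t)) :
    (Finset.Icc 0 i1).image (pv σ) = Finset.Icc (pv σ i1) (pv σ i1 + i1) := by
  ext v
  simp only [Finset.mem_image, Finset.mem_Icc]
  constructor
  · rintro ⟨t, ht, rfl⟩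
    have := hrun1 t ht.2
    omega
  · rintro ⟨hv1, hv2⟩
    refine ⟨i1 - (v - pv σ i1), ⟨by omega, by omega⟩, ?_⟩
    have := hrun1 (i1 - (v - pv σ i1)) (by omega)
    omega

/-- two 312-avoiders with one ascent and matching invariants agree -/
lemma uniq1 {σ τ : Equiv.Perm (Fin n)} (hσ : Av312N σ) (hτ : Av312N τ)
    {i1 j1 : ℕ} (hascσ : ascN σ = {i1}) (hascτ : ascN τ = {j1})
    (h0 : pv σ 0 = pv τ 0) (ha : pv σ i1 = pv τ j1) : σ = τ := by
  obtain ⟨hσ1, hσr, hσb⟩ := asc1_facts hσ hascσ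
  obtain ⟨hτ1, hτr, hτb⟩ := asc1_facts hτ hascτ
  have hσ0 := hσr 0 (by omega)
  have hτ0 := hτr 0 (by omega)
  have hii : i1 = j1 := by omega
  subst hii
  have hdescσ : ∀ t, t + 1 < n → t ≠ i1 → pv σ (t+1) < pv σ t := by
    intro t ht hne
    exact desc_of_not_asc ht (by rw [hascσ]; simpa using hne)
  have hdescτ : ∀ t, t + 1 < n → t ≠ i1 → pv τ (t+1) < pv τ t := by
    intro t ht hne
    exact desc_of_not_asc ht (by rw [hascτ]; simpa using hne)
  have himg1 : (Finset.Icc 0 i1).image (pv σ) = (Finset.Icc 0 i1).image (pv τ) := by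
    rw [run1_image (by omega) hσr, run1_image (by omega) hτr, ha]
  have heq1 : ∀ t, t ≤ i1 → pv σ t = pv τ t := by
    intro t ht
    have := hσr t ht; have := hτr t ht; omega
  have himg2 : (Finset.Icc (i1+1) (n-1)).image (pv σ) =
      (Finset.Icc (i1+1) (n-1)).image (pv τ) := by
    rw [image_tail σ (by omega) (by omega), image_tail τ (by omega) (by omega), himg1]
  have heq2 := run_uniq (n - 1 - (i1+1)) (i1+1)
    (fun t ht ht' => hdescσ t (by omega) (by omega))
    (fun t ht ht' => hdescτ t (by omega) (by omega))
    (by rw [show i1 + 1 + (n - 1 - (i1+1)) = n - 1 by omega]; exact himg2)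
  apply perm_ext
  intro i hi
  rcases Nat.lt_or_ge i (i1+1) with h | h
  · exact heq1 i (by omega)
  · exact heq2 i h (by omega)

/-- one-ascent construction -/
def f1 (n a b : ℕ) : ℕ → ℕ := fun i =>
  if i < b - a then b - 1 - i else if i < n - a then n - 1 - i + (b - a) else n - 1 - i

lemma f1_bound {a b : ℕ} (hab : a < b) (hbn : b < n) : ∀ i, i < n → f1 n a b i < n := by
  intro i hi
  unfold f1
  split_ifs <;> omega

lemma f1_inj {a b : ℕ} (hab : a < b) (hbn : b < n) :
    ∀ i j, i < n → j < n → f1 n a b i = f1 n a b j → i = j := by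
  intro i j hi hj h
  unfold f1 at h
  split_ifs at h <;> omega

noncomputable def σ1 {n : ℕ} {a b : ℕ} (hab : a < b) (hbn : b < n) : Equiv.Perm (Fin n) :=
  mkPerm (f1 n a b) (f1_bound hab hbn) (f1_inj hab hbn)

lemma σ1_avoids {a b : ℕ} (hab : a < b) (hbn : b < n) : Avoids312 (σ1 hab hbn) := by
  apply avoids312_mk
  intro i j k hij hjk hk
  unfold f1
  split_ifs <;> omega

lemma σ1_asc {a b : ℕ} (hab : a < b) (hbn : b < n) : ascN (σ1 hab hbn) = {b - a - 1} := by
  ext i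
  simp only [mem_ascN, Finset.mem_singleton]
  constructor
  · rintro ⟨h1, h2⟩
    rw [σ1, pv_mkPerm _ _ _ (by omega), pv_mkPerm _ _ _ h1] at h2
    unfold f1 at h2
    split_ifs at h2 <;> omega
  · rintro rfl
    refine ⟨by omega, ?_⟩
    rw [σ1, pv_mkPerm _ _ _ (by omega), pv_mkPerm _ _ _ (by omega)]
    unfold f1
    split_ifs <;> omega

lemma σ1_pv0 {a b : ℕ} (hab : a < b) (hbn : b < n) : pv (σ1 hab hbn) 0 = b - 1 := by
  rw [σ1, pv_mkPerm _ _ _ (by omega)]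
  unfold f1
  split_ifs <;> omega

lemma σ1_pva {a b : ℕ} (hab : a < b) (hbn : b < n) : pv (σ1 hab hbn) (b - a - 1) = a := by
  rw [σ1, pv_mkPerm _ _ _ (by omega)]
  unfold f1
  split_ifs <;> omega

/-- parameter set for one ascent -/
def P1 (n : ℕ) : Finset (Σ _ : ℕ, ℕ) := (Finset.Ico 1 n).sigma fun b => Finset.range b

lemma card_asc1 (hn : 1 ≤ n) :
    (Finset.univ.filter (fun σ : Equiv.Perm (Fin n) =>
      Avoids312 σ ∧ (ascN σ).card = 1)).card = (P1 n).card := by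
  classical
  apply le_antisymm
  · -- extract parameters
    apply Finset.card_le_card_of_injOn
      (fun σ => (⟨pv σ 0 + 1, pv σ ((ascN σ).min.getD 0)⟩ : Σ _ : ℕ, ℕ))
    · intro σ hσ
      simp only [Finset.mem_coe, Finset.mem_filter, Finset.mem_univ, true_and] at hσ
      obtain ⟨i1, hasc⟩ := Finset.card_eq_one.mp hσ.2
      have hmin : (ascN σ).min.getD 0 = i1 := by rw [hasc, Finset.min_singleton]; rfl
      simp only [Finset.mem_coe]
      rw [hmin]
      obtain ⟨h1, hrun, hb⟩ := asc1_facts (av312N_of hσ.1) hasc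
      have := hrun 0 (by omega)
      simp only [P1, Finset.mem_sigma, Finset.mem_Ico, Finset.mem_range]
      omega
    · intro σ hσ' τ hτ' h
      simp only [Finset.mem_coe, Finset.mem_filter, Finset.mem_univ, true_and] at hσ' hτ'
      obtain ⟨i1, hascσ⟩ := Finset.card_eq_one.mp hσ'.2
      obtain ⟨j1, hascτ⟩ := Finset.card_eq_one.mp hτ'.2
      have hminσ : (ascN σ).min.getD 0 = i1 := by rw [hascσ, Finset.min_singleton]; rfl
      have hminτ : (ascN τ).min.getD 0 = j1 := by rw [hascτ, Finset.min_singleton]; rfl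
      simp only [hminσ, hminτ] at h
      have h1 : pv σ 0 + 1 = pv τ 0 + 1 := congrArg (fun s : (Σ _ : ℕ, ℕ) => s.1) h
      have h2 : pv σ i1 = pv τ j1 := congrArg (fun s : (Σ _ : ℕ, ℕ) => s.2) h
      exact uniq1 (av312N_of hσ'.1) (av312N_of hτ'.1) hascσ hascτ (by omega) h2
  · -- construct permutations
    have hconstruct : ∀ p : Σ _ : ℕ, ℕ, p ∈ P1 n →
        ∃ σ : Equiv.Perm (Fin n), (Avoids312 σ ∧ (ascN σ).card = 1) ∧
          pv σ 0 = p.1 - 1 ∧ ascN σ = {p.1 - p.2 - 1} := by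
      rintro ⟨b, a⟩ hp
      simp only [P1, Finset.mem_sigma, Finset.mem_Ico, Finset.mem_range] at hp
      have hab : a < b := hp.2
      have hbn : b < n := hp.1.2
      exact ⟨σ1 hab hbn, ⟨σ1_avoids hab hbn, by rw [σ1_asc hab hbn]; simp⟩,
        σ1_pv0 hab hbn, σ1_asc hab hbn⟩
    choose g hg1 hg2 using hconstruct
    apply Finset.card_le_card_of_injOn (fun p => if h : p ∈ P1 n then g p h else 1)
    · intro p hp
      simp only [Finset.mem_coe] at hp ⊢
      simp only [dif_pos hp, Finset.mem_filter, Finset.mem_univ, true_and]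
      exact hg1 p hp
    · intro p hp q hq h
      simp only [Finset.mem_coe] at hp hq
      simp only [dif_pos hp, dif_pos hq] at h
      obtain ⟨hp0, hpa⟩ := hg2 p hp
      obtain ⟨hq0, hqa⟩ := hg2 q hq
      rw [h] at hp0 hpa
      rw [hq0] at hp0
      rw [hqa] at hpa
      have hsing := Finset.singleton_injective hpa
      simp only [P1, Finset.mem_sigma, Finset.mem_Ico, Finset.mem_range] at hp hq
      obtain ⟨b, a⟩ := p
      obtain ⟨b', a'⟩ := q
      simp only at hp hq hp0 hsing
      have hb : b = b' := by omega
      subst hb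
      have ha : a = a' := by omega
      subst ha
      rfl

/-- facts about a 312-avoider with exactly two ascents i1 < i2 -/
lemma asc2_facts {σ : Equiv.Perm (Fin n)} (hσ : Av312N σ) {i1 i2 : ℕ}
    (hasc : ascN σ = {i1, i2}) (h12 : i1 < i2) :
    i1 + 1 < n ∧ i2 + 1 < n ∧
    (∀ t, t ≤ i1 → pv σ t = pv σ i1 + (i1 - t)) ∧
    pv σ i1 < pv σ (i1+1) ∧ pv σ i2 < pv σ (i2+1) ∧
    pv σ i1 + i1 + 1 ≤ pv σ (i1+1) ∧
    pv σ i2 ≤ pv σ (i1+1) ∧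
    ¬(pv σ i1 ≤ pv σ i2 ∧ pv σ i2 < pv σ i1 + i1 + 1) ∧
    pv σ (i1+1) + 2 ≤ n ∧
    pv σ (i2+1) = n - 1 ∧
    (∀ v, v < n → ((∃ t, i1+1 ≤ t ∧ t ≤ i2 ∧ pv σ t = v) ↔
       (pv σ i2 ≤ v ∧ v ≤ pv σ (i1+1) ∧
         ¬(pv σ i1 ≤ v ∧ v < pv σ i1 + i1 + 1)))) := by
  have hm1 : i1 ∈ ascN σ := by rw [hasc]; simp
  have hm2 : i2 ∈ ascN σ := by rw [hasc]; simp
  rw [mem_ascN] at hm1 hm2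
  have hdesc : ∀ t, t + 1 < n → t ≠ i1 → t ≠ i2 → pv σ (t+1) < pv σ t := by
    intro t ht h1 h2
    apply desc_of_not_asc ht
    rw [hasc]; simp only [Finset.mem_insert, Finset.mem_singleton]; tauto
  have hrun1 : ∀ t, t ≤ i1 → pv σ t = pv σ i1 + (i1 - t) :=
    run1_formula hσ (by omega) (fun t ht => hdesc t (by omega) (by omega) (by omega))
  set a := pv σ i1 with ha
  set b := pv σ i1 + i1 + 1 with hb
  set m := pv σ i2 with hm
  set M := pv σ (i1+1) with hM
  -- any value in [a,b) sits in run 1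
  have hrun1_cover : ∀ v, a ≤ v → v < b → ∃ t, t ≤ i1 ∧ pv σ t = v := by
    intro v hv1 hv2
    exact ⟨i1 - (v - a), by omega, by rw [hrun1 (i1 - (v - a)) (by omega)]; omega⟩
  -- run-2 is decreasing
  have hdesc2 : ∀ t, i1 + 1 ≤ t → t < i2 → pv σ (t+1) < pv σ t := by
    intro t ht ht'
    exact hdesc t (by omega) (by omega) (by omega)
  have hrun2_le : ∀ t, i1 + 1 ≤ t → t ≤ i2 → m ≤ pv σ t ∧ pv σ t ≤ M := by
    intro t ht ht'
    constructor
    · rcases eq_or_lt_of_le ht' with rfl | h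
      · omega
      · exact le_of_lt (decr_run hdesc2 ht h (le_refl i2))
    · rcases eq_or_lt_of_le ht with rfl | h
      · omega
      · exact le_of_lt (decr_run hdesc2 (le_refl (i1+1)) h (by omega))
  have hMnotA : ¬(a ≤ M ∧ M < b) := by
    rintro ⟨hM1, hM2⟩
    obtain ⟨t, ht, htv⟩ := hrun1_cover M hM1 hM2
    have := pv_inj σ (by omega) (by omega) htv
    omega
  have hbM : b ≤ M := by omega
  have hmnotA : ¬(a ≤ m ∧ m < b) := by
    rintro ⟨h1, h2⟩
    obtain ⟨t, ht, htv⟩ := hrun1_cover m h1 h2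
    have := pv_inj σ (by omega) (by omega) htv
    omega
  have hmM : m ≤ M := (hrun2_le i2 (by omega) le_rfl).2
  -- the run-2 value set
  have hBset : ∀ v, v < n → ((∃ t, i1+1 ≤ t ∧ t ≤ i2 ∧ pv σ t = v) ↔
      (m ≤ v ∧ v ≤ M ∧ ¬(a ≤ v ∧ v < b))) := by
    intro v hv
    constructor
    · rintro ⟨t, ht1, ht2, rfl⟩
      refine ⟨(hrun2_le t ht1 ht2).1, (hrun2_le t ht1 ht2).2, ?_⟩
      rintro ⟨h1, h2⟩
      obtain ⟨u, hu, huv⟩ := hrun1_cover _ h1 h2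
      have := pv_inj σ (by omega) (by omega) huv
      omega
    · rintro ⟨h1, h2, h3⟩
      obtain ⟨p, hp, hpv⟩ := pv_surj σ hv
      rcases Nat.lt_or_ge p (i1+1) with hcase | hcase
      · exfalso
        have := hrun1 p (by omega)
        omega
      rcases le_or_gt p i2 with hcase2 | hcase2
      · exact ⟨p, hcase, hcase2, hpv⟩
      exfalso
      -- v sits after run 2 : find a 312 pattern or contradiction
      rcases eq_or_lt_of_le h2 with he | hMlt
      · -- v = M but M is at position i1+1
        have := pv_inj σ (by omega) hp (by rw [hpv, he] : pv σ (i1+1) = pv σ p)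
        omega
      rcases eq_or_lt_of_le h1 with he | hmlt
      · -- v = m but m is at position i2
        have := pv_inj σ (by omega) hp (by rw [hpv, ← he] : pv σ i2 = pv σ p)
        omega
      -- m < v < M : 312 pattern (i1+1, i2, p)
      have hne : i1 + 1 ≠ i2 := by
        intro he
        rw [← he] at hm
        omega
      exact hσ (i1+1) i2 p (by omega) (by omega) (by omega) (by omega) (by omega)
  -- position of the top value n-1
  obtain ⟨q, hq, hqv⟩ := pv_surj σ (show n - 1 < n by omega)
  have htop : pv σ (i2+1) = n - 1 := by
    rcases Nat.lt_or_ge q (i1+1) with hcase | hcase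
    · exfalso
      have := hrun1 q (by omega)
      have := pv_lt σ (show i1 + 1 < n by omega)
      omega
    rcases le_or_gt q i2 with hcase2 | hcase2
    · exfalso
      -- n-1 in run 2 forces M = n-1 ; then the ascent at i2 is impossible
      have hMn : M = n - 1 := by
        have := (hrun2_le q hcase hcase2).2
        have := pv_lt σ (show i1 + 1 < n by omega)
        omega
      set v := pv σ (i2+1) with hv
      have hvn : v < n := pv_lt σ (by omega)
      have hvm : m < v := hm2.2
      have hnotA : ¬(a ≤ v ∧ v < b) := by
        rintro ⟨h1, h2⟩
        obtain ⟨u, hu, huv⟩ := hrun1_cover v h1 h2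
        have := pv_inj σ (by omega) (by omega) huv
        omega
      have : ∃ t, i1+1 ≤ t ∧ t ≤ i2 ∧ pv σ t = v := by
        rw [hBset v hvn]
        exact ⟨by omega, by omega, hnotA⟩
      obtain ⟨t, ht1, ht2, htv⟩ := this
      have := pv_inj σ (by omega) (by omega) htv
      omega
    · -- n-1 in run 3 : run3 decreasing gives pv (i2+1) ≥ n-1
      rcases eq_or_lt_of_le (show i2 + 1 ≤ q by omega) with rfl | hlt
      · exact hqv
      have hdesc3 : ∀ t, i2 + 1 ≤ t → t < q → pv σ (t+1) < pv σ t := by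
        intro t ht ht'
        exact hdesc t (by omega) (by omega) (by omega)
      have := decr_run hdesc3 (le_refl (i2+1)) hlt (le_refl q)
      have := pv_lt σ (show i2 + 1 < n by omega)
      omega
  have hMn2 : M + 2 ≤ n := by
    have hne : i1 + 1 ≠ i2 + 1 := by omega
    have : pv σ (i1+1) ≠ pv σ (i2+1) := fun he => hne (pv_inj σ (by omega) (by omega) he)
    have := pv_lt σ (show i1 + 1 < n by omega)
    omega
  exact ⟨hm1.1, hm2.1, hrun1, hm1.2, hm2.2, hbM, hmM, hmnotA, hMn2, htop, hBset⟩

/-- run-2 image as a finset -/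
lemma run2_image {σ : Equiv.Perm (Fin n)} {i1 i2 : ℕ} (hi2 : i2 < n)
    (hB : ∀ v, v < n → ((∃ t, i1+1 ≤ t ∧ t ≤ i2 ∧ pv σ t = v) ↔
       (pv σ i2 ≤ v ∧ v ≤ pv σ (i1+1) ∧
         ¬(pv σ i1 ≤ v ∧ v < pv σ i1 + i1 + 1)))) (hM : pv σ (i1+1) < n) :
    (Finset.Icc (i1+1) i2).image (pv σ) =
      (Finset.Icc (pv σ i2) (pv σ (i1+1))) \
        (Finset.Ico (pv σ i1) (pv σ i1 + i1 + 1)) := by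
  ext v
  simp only [Finset.mem_image, Finset.mem_sdiff, Finset.mem_Icc, Finset.mem_Ico]
  constructor
  · rintro ⟨t, ht, rfl⟩
    have h := (hB (pv σ t) (pv_lt σ (by omega))).mp ⟨t, ht.1, ht.2, rfl⟩
    exact ⟨⟨h.1, h.2.1⟩, h.2.2⟩
  · rintro ⟨⟨h1, h2⟩, h3⟩
    obtain ⟨t, ht1, ht2, htv⟩ := (hB v (by omega)).mpr ⟨h1, h2, h3⟩
    exact ⟨t, ⟨ht1, ht2⟩, htv⟩

/-- two 312-avoiders with two ascents and matching invariants agree -/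
lemma uniq2 {σ τ : Equiv.Perm (Fin n)} (hσ : Av312N σ) (hτ : Av312N τ)
    {i1 i2 j1 j2 : ℕ} (hascσ : ascN σ = {i1, i2}) (hascτ : ascN τ = {j1, j2})
    (h12 : i1 < i2) (h12' : j1 < j2)
    (h0 : pv σ 0 = pv τ 0) (hva : pv σ i1 = pv τ j1)
    (hvM : pv σ (i1+1) = pv τ (j1+1)) (hvm : pv σ i2 = pv τ j2) : σ = τ := by
  obtain ⟨hσa, hσb, hσr1, hσc, hσd, hσe, hσf, hσg, hσh, hσi, hσB⟩ := asc2_facts hσ hascσ h12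
  obtain ⟨hτa, hτb, hτr1, hτc, hτd, hτe, hτf, hτg, hτh, hτi, hτB⟩ := asc2_facts hτ hascτ h12'
  have hσ0 := hσr1 0 (by omega)
  have hτ0 := hτr1 0 (by omega)
  have hii : i1 = j1 := by omega
  subst hii
  -- i2 = j2 via the cardinality of run 2
  have hcardσ : (Finset.Icc (i1+1) i2).card =
      ((Finset.Icc (pv σ i2) (pv σ (i1+1))) \
        (Finset.Ico (pv σ i1) (pv σ i1 + i1 + 1))).card := by
    rw [← run2_image (by omega) hσB (pv_lt σ (by omega))]
    rw [Finset.card_image_of_injOn]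
    intro x hx y hy hxy
    simp only [Finset.coe_Icc, Set.mem_Icc] at hx hy
    exact pv_inj σ (by omega) (by omega) hxy
  have hcardτ : (Finset.Icc (i1+1) j2).card =
      ((Finset.Icc (pv τ j2) (pv τ (i1+1))) \
        (Finset.Ico (pv τ i1) (pv τ i1 + i1 + 1))).card := by
    rw [← run2_image (by omega) hτB (pv_lt τ (by omega))]
    rw [Finset.card_image_of_injOn]
    intro x hx y hy hxy
    simp only [Finset.coe_Icc, Set.mem_Icc] at hx hy
    exact pv_inj τ (by omega) (by omega) hxy
  rw [hvm, hvM, hva] at hcardσ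
  rw [← hcardτ] at hcardσ
  rw [Nat.card_Icc, Nat.card_Icc] at hcardσ
  have hjj : i2 = j2 := by omega
  subst hjj
  -- now compare pointwise
  have hdescσ : ∀ t, t + 1 < n → t ≠ i1 → t ≠ i2 → pv σ (t+1) < pv σ t := by
    intro t ht hne1 hne2
    apply desc_of_not_asc ht
    rw [hascσ]; simp only [Finset.mem_insert, Finset.mem_singleton]; tauto
  have hdescτ : ∀ t, t + 1 < n → t ≠ i1 → t ≠ i2 → pv τ (t+1) < pv τ t := by
    intro t ht hne1 hne2
    apply desc_of_not_asc ht
    rw [hascτ]; simp only [Finset.mem_insert, Finset.mem_singleton]; tauto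
  have heq1 : ∀ t, t ≤ i1 → pv σ t = pv τ t := by
    intro t ht
    have := hσr1 t ht; have := hτr1 t ht; omega
  -- run 2 equality
  have himg2 : (Finset.Icc (i1+1) i2).image (pv σ) = (Finset.Icc (i1+1) i2).image (pv τ) := by
    rw [run2_image (by omega) hσB (pv_lt σ (by omega)),
      run2_image (by omega) hτB (pv_lt τ (by omega)), hva, hvM, hvm]
  have heq2 := run_uniq (i2 - (i1+1)) (i1+1)
    (fun t ht ht' => hdescσ t (by omega) (by omega) (by omega))
    (fun t ht ht' => hdescτ t (by omega) (by omega) (by omega))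
    (by rw [show i1 + 1 + (i2 - (i1+1)) = i2 by omega]; exact himg2)
  -- run 3 equality through complements
  have himg01 : (Finset.Icc 0 i2).image (pv σ) = (Finset.Icc 0 i2).image (pv τ) := by
    have hsplit : Finset.Icc 0 i2 = Finset.Icc 0 i1 ∪ Finset.Icc (i1+1) i2 := by
      ext x; simp only [Finset.mem_Icc, Finset.mem_union]; omega
    rw [hsplit, Finset.image_union, Finset.image_union, himg2,
      run1_image (by omega) hσr1, run1_image (by omega) hτr1, hva]
  have himg3 : (Finset.Icc (i2+1) (n-1)).image (pv σ) =
      (Finset.Icc (i2+1) (n-1)).image (pv τ) := by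
    rw [image_tail σ (by omega) (by omega), image_tail τ (by omega) (by omega), himg01]
  have heq3 := run_uniq (n - 1 - (i2+1)) (i2+1)
    (fun t ht ht' => hdescσ t (by omega) (by omega) (by omega))
    (fun t ht ht' => hdescτ t (by omega) (by omega) (by omega))
    (by rw [show i2 + 1 + (n - 1 - (i2+1)) = n - 1 by omega]; exact himg3)
  apply perm_ext
  intro i hi
  rcases Nat.lt_or_ge i (i1+1) with h | h
  · exact heq1 i (by omega)
  rcases le_or_gt i i2 with h' | h'
  · exact heq2 i h (by omega)
  · exact heq3 i (by omega) (by omega)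

/-- two-ascent construction -/
def f2 (n a b m M : ℕ) : ℕ → ℕ := fun i =>
  if b ≤ m then
    if i < b - a then b - 1 - i
    else if i < b - a + (M + 1 - m) then M - (i - (b - a))
    else if i < b - a + (M + 1 - m) + (n - 1 - M) then n - 1 - (i - (b - a + (M + 1 - m)))
    else if i < b - a + (M + 1 - m) + (n - 1 - M) + (m - b) then
      m - 1 - (i - (b - a + (M + 1 - m) + (n - 1 - M)))
    else a - 1 - (i - (b - a + (M + 1 - m) + (n - 1 - M) + (m - b)))
  else
    if i < b - a then b - 1 - i
    else if i < b - a + (M + 1 - b) then M - (i - (b - a))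
    else if i < b - a + (M + 1 - b) + (a - m) then a - 1 - (i - (b - a + (M + 1 - b)))
    else if i < b - a + (M + 1 - b) + (a - m) + (n - 1 - M) then
      n - 1 - (i - (b - a + (M + 1 - b) + (a - m)))
    else m - 1 - (i - (b - a + (M + 1 - b) + (a - m) + (n - 1 - M)))

/-- length of run 2 for the construction -/
def lB (a b m M : ℕ) : ℕ := if b ≤ m then M + 1 - m else M + 1 - b + (a - m)

/-- parameter predicate -/
def okP (n a b m M : ℕ) : Prop :=
  a < b ∧ b ≤ M ∧ M + 2 ≤ n ∧ m ≤ M ∧ (m < a ∨ b ≤ m)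

lemma f2_bound {a b m M : ℕ} (h : okP n a b m M) : ∀ i, i < n → f2 n a b m M i < n := by
  obtain ⟨h1, h2, h3, h4, h5⟩ := h
  intro i hi
  unfold f2
  split_ifs <;> omega

lemma f2_inj {a b m M : ℕ} (h : okP n a b m M) :
    ∀ i j, i < n → j < n → f2 n a b m M i = f2 n a b m M j → i = j := by
  obtain ⟨h1, h2, h3, h4, h5⟩ := h
  intro i j hi hj hij
  unfold f2 at hij
  split_ifs at hij <;> omega

noncomputable def σ2 {n a b m M : ℕ} (h : okP n a b m M) : Equiv.Perm (Fin n) :=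
  mkPerm (f2 n a b m M) (f2_bound h) (f2_inj h)

set_option maxHeartbeats 3200000 in
lemma σ2_avoids {a b m M : ℕ} (h : okP n a b m M) : Avoids312 (σ2 h) := by
  obtain ⟨h1, h2, h3, h4, h5⟩ := h
  apply avoids312_mk
  intro i j k hij hjk hk
  rcases h5 with h5 | h5
  · simp only [f2, if_neg (show ¬ b ≤ m by omega)]
    split_ifs <;> omega
  · simp only [f2, if_pos h5]
    split_ifs <;> omega

set_option maxHeartbeats 1600000 in
lemma σ2_asc {a b m M : ℕ} (h : okP n a b m M) :
    ascN (σ2 h) = {b - a - 1, b - a + lB a b m M - 1} := by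
  obtain ⟨h1, h2, h3, h4, h5⟩ := h
  ext i
  simp only [mem_ascN, Finset.mem_insert, Finset.mem_singleton]
  rcases h5 with h5 | h5
  · rw [show lB a b m M = M + 1 - b + (a - m) from if_neg (by omega)]
    constructor
    · rintro ⟨hi, h6⟩
      unfold σ2 at h6; rw [pv_mkPerm _ _ _ (by omega), pv_mkPerm _ _ _ hi] at h6
      simp only [f2, if_neg (show ¬ b ≤ m by omega)] at h6
      split_ifs at h6 <;> omega
    · intro hcase
      have hin : i + 1 < n := by omega
      refine ⟨hin, ?_⟩
      unfold σ2; rw [pv_mkPerm _ _ _ (by omega), pv_mkPerm _ _ _ hin]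
      simp only [f2, if_neg (show ¬ b ≤ m by omega)]
      split_ifs <;> omega
  · rw [show lB a b m M = M + 1 - m from if_pos h5]
    constructor
    · rintro ⟨hi, h6⟩
      unfold σ2 at h6; rw [pv_mkPerm _ _ _ (by omega), pv_mkPerm _ _ _ hi] at h6
      simp only [f2, if_pos h5] at h6
      split_ifs at h6 <;> omega
    · intro hcase
      have hin : i + 1 < n := by omega
      refine ⟨hin, ?_⟩
      unfold σ2; rw [pv_mkPerm _ _ _ (by omega), pv_mkPerm _ _ _ hin]
      simp only [f2, if_pos h5]
      split_ifs <;> omega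

lemma σ2_pv0 {a b m M : ℕ} (h : okP n a b m M) : pv (σ2 h) 0 = b - 1 := by
  obtain ⟨h1, h2, h3, h4, h5⟩ := h
  unfold σ2; rw [pv_mkPerm _ _ _ (by omega)]
  unfold f2
  split_ifs <;> omega

lemma σ2_pva {a b m M : ℕ} (h : okP n a b m M) : pv (σ2 h) (b - a - 1) = a := by
  obtain ⟨h1, h2, h3, h4, h5⟩ := h
  unfold σ2; rw [pv_mkPerm _ _ _ (by omega)]
  unfold f2
  split_ifs <;> omega

lemma σ2_pvM {a b m M : ℕ} (h : okP n a b m M) : pv (σ2 h) (b - a) = M := by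
  obtain ⟨h1, h2, h3, h4, h5⟩ := h
  unfold σ2; rw [pv_mkPerm _ _ _ (by omega)]
  unfold f2
  split_ifs <;> omega

lemma σ2_pvm {a b m M : ℕ} (h : okP n a b m M) :
    pv (σ2 h) (b - a + lB a b m M - 1) = m := by
  obtain ⟨h1, h2, h3, h4, h5⟩ := h
  unfold σ2; rw [pv_mkPerm _ _ _ (by unfold lB; split_ifs <;> omega)]
  unfold f2 lB
  split_ifs <;> omega

lemma lB_pos {a b m M : ℕ} (h : okP n a b m M) : 1 ≤ lB a b m M := by
  obtain ⟨h1, h2, h3, h4, h5⟩ := h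
  unfold lB
  split_ifs <;> omega

lemma pair_min {x y : ℕ} (h : x < y) : ({x, y} : Finset ℕ).min.getD 0 = x := by
  have hne : ({x, y} : Finset ℕ).Nonempty := ⟨x, by simp⟩
  rw [← Finset.coe_min' hne]
  show ({x, y} : Finset ℕ).min' hne = x
  apply le_antisymm
  · exact Finset.min'_le _ x (by simp)
  · apply Finset.le_min'
    intro z hz
    simp only [Finset.mem_insert, Finset.mem_singleton] at hz
    omega

lemma pair_max {x y : ℕ} (h : x < y) : ({x, y} : Finset ℕ).max.getD 0 = y := by
  have hne : ({x, y} : Finset ℕ).Nonempty := ⟨x, by simp⟩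
  rw [← Finset.coe_max' hne]
  show ({x, y} : Finset ℕ).max' hne = y
  apply le_antisymm
  · apply Finset.max'_le
    intro z hz
    simp only [Finset.mem_insert, Finset.mem_singleton] at hz
    omega
  · exact Finset.le_max' _ y (by simp)

/-- parameter set for two ascents : elements ⟨M, b, a, m⟩ -/
def P2 (n : ℕ) : Finset (Σ _ : ℕ, Σ _ : ℕ, Σ _ : ℕ, ℕ) :=
  (Finset.range (n-1)).sigma fun M =>
    (Finset.Icc 1 M).sigma fun b =>
      (Finset.range b).sigma fun a =>
        (Finset.range (M+1)) \ (Finset.Ico a b)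

lemma mem_P2 {p : Σ _ : ℕ, Σ _ : ℕ, Σ _ : ℕ, ℕ} :
    p ∈ P2 n ↔ p.1 + 1 < n ∧ 1 ≤ p.2.1 ∧ p.2.1 ≤ p.1 ∧ p.2.2.1 < p.2.1 ∧
      p.2.2.2 < p.1 + 1 ∧ ¬(p.2.2.1 ≤ p.2.2.2 ∧ p.2.2.2 < p.2.1) := by
  obtain ⟨M, b, a, m⟩ := p
  simp only [P2, Finset.mem_sigma, Finset.mem_range, Finset.mem_Icc, Finset.mem_sdiff,
    Finset.mem_Ico]
  omega

lemma okP_of_mem_P2 {p : Σ _ : ℕ, Σ _ : ℕ, Σ _ : ℕ, ℕ} (hp : p ∈ P2 n) :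
    okP n p.2.2.1 p.2.1 p.2.2.2 p.1 := by
  rw [mem_P2] at hp
  exact ⟨by omega, by omega, by omega, by omega, by omega⟩

lemma card_asc2 (hn : 1 ≤ n) :
    (Finset.univ.filter (fun σ : Equiv.Perm (Fin n) =>
      Avoids312 σ ∧ (ascN σ).card = 2)).card = (P2 n).card := by
  classical
  -- helper to normalize two-element ascent sets
  have hpair : ∀ σ : Equiv.Perm (Fin n), (ascN σ).card = 2 →
      ∃ i1 i2, i1 < i2 ∧ ascN σ = {i1, i2} ∧
        (ascN σ).min.getD 0 = i1 ∧ (ascN σ).max.getD 0 = i2 := by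
    intro σ hcard
    obtain ⟨x, y, hxy, hset⟩ := Finset.card_eq_two.mp hcard
    rcases lt_or_gt_of_ne hxy with h | h
    · exact ⟨x, y, h, hset, by rw [hset]; exact pair_min h, by rw [hset]; exact pair_max h⟩
    · refine ⟨y, x, h, by rw [hset]; exact Finset.pair_comm x y, ?_, ?_⟩
      · rw [hset, Finset.pair_comm x y]; exact pair_min h
      · rw [hset, Finset.pair_comm x y]; exact pair_max h
  apply le_antisymm
  · apply Finset.card_le_card_of_injOn
      (fun σ => (⟨pv σ ((ascN σ).min.getD 0 + 1), pv σ 0 + 1, pv σ ((ascN σ).min.getD 0),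
        pv σ ((ascN σ).max.getD 0)⟩ : Σ _ : ℕ, Σ _ : ℕ, Σ _ : ℕ, ℕ))
    · intro σ hσ
      simp only [Finset.mem_coe, Finset.mem_filter, Finset.mem_univ, true_and] at hσ
      obtain ⟨i1, i2, h12, hasc, hmin, hmax⟩ := hpair σ hσ.2
      simp only [Finset.mem_coe]
      rw [hmin, hmax]
      obtain ⟨ha', hb', hr1, hc', hd', he', hf', hg', hh', hi', hB'⟩ :=
        asc2_facts (av312N_of hσ.1) hasc h12
      have h0 := hr1 0 (by omega)
      rw [mem_P2]
      dsimp only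
      refine ⟨by omega, by omega, by omega, by omega, by omega, by omega⟩
    · intro σ hσ' τ hτ' h
      simp only [Finset.mem_coe, Finset.mem_filter, Finset.mem_univ, true_and] at hσ' hτ'
      obtain ⟨i1, i2, h12, hascσ, hminσ, hmaxσ⟩ := hpair σ hσ'.2
      obtain ⟨j1, j2, h12', hascτ, hminτ, hmaxτ⟩ := hpair τ hτ'.2
      dsimp only at h
      rw [hminσ, hmaxσ, hminτ, hmaxτ] at h
      have e1 := congrArg (fun s : (Σ _ : ℕ, Σ _ : ℕ, Σ _ : ℕ, ℕ) => s.1) h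
      have e2 := congrArg (fun s : (Σ _ : ℕ, Σ _ : ℕ, Σ _ : ℕ, ℕ) => s.2.1) h
      have e3 := congrArg (fun s : (Σ _ : ℕ, Σ _ : ℕ, Σ _ : ℕ, ℕ) => s.2.2.1) h
      have e4 := congrArg (fun s : (Σ _ : ℕ, Σ _ : ℕ, Σ _ : ℕ, ℕ) => s.2.2.2) h
      dsimp only at e1 e2 e3 e4
      exact uniq2 (av312N_of hσ'.1) (av312N_of hτ'.1) hascσ hascτ h12 h12'
        (by omega) e3 e1 e4
  · have hconstruct : ∀ p : Σ _ : ℕ, Σ _ : ℕ, Σ _ : ℕ, ℕ, p ∈ P2 n →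
        ∃ σ : Equiv.Perm (Fin n), (Avoids312 σ ∧ (ascN σ).card = 2) ∧
          pv σ 0 = p.2.1 - 1 ∧
          ascN σ = {p.2.1 - p.2.2.1 - 1, p.2.1 - p.2.2.1 + lB p.2.2.1 p.2.1 p.2.2.2 p.1 - 1} ∧
          pv σ (p.2.1 - p.2.2.1) = p.1 ∧
          pv σ (p.2.1 - p.2.2.1 + lB p.2.2.1 p.2.1 p.2.2.2 p.1 - 1) = p.2.2.2 := by
      intro p hp
      have hok := okP_of_mem_P2 hp
      refine ⟨σ2 hok, ⟨σ2_avoids hok, ?_⟩, σ2_pv0 hok, σ2_asc hok, σ2_pvM hok, σ2_pvm hok⟩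
      rw [σ2_asc hok]
      rw [Finset.card_insert_of_notMem, Finset.card_singleton]
      simp only [Finset.mem_singleton]
      have := lB_pos hok
      obtain ⟨h1, h2, h3, h4, h5⟩ := hok
      omega
    choose g hg1 hg2 using hconstruct
    apply Finset.card_le_card_of_injOn (fun p => if h : p ∈ P2 n then g p h else 1)
    · intro p hp
      simp only [Finset.mem_coe] at hp ⊢
      simp only [dif_pos hp, Finset.mem_filter, Finset.mem_univ, true_and]
      exact hg1 p hp
    · intro p hp q hq h
      simp only [Finset.mem_coe] at hp hq
      simp only [dif_pos hp, dif_pos hq] at h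
      obtain ⟨hp0, hpasc, hpM, hpm⟩ := hg2 p hp
      obtain ⟨hq0, hqasc, hqM, hqm⟩ := hg2 q hq
      rw [h] at hp0 hpasc hpM hpm
      have hokp := okP_of_mem_P2 hp
      have hokq := okP_of_mem_P2 hq
      obtain ⟨M, b, a, m⟩ := p
      obtain ⟨M', b', a', m'⟩ := q
      obtain ⟨hp1, hp2, hp3, hp4, hp5⟩ := hokp
      obtain ⟨hq1, hq2, hq3, hq4, hq5⟩ := hokq
      simp only at hp0 hpasc hpM hpm hq0 hqasc hqM hqm hp1 hp2 hp3 hp4 hp5 hq1 hq2 hq3 hq4 hq5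
      -- compare ascent sets through min/max
      have hlBp : 1 ≤ lB a b m M := by unfold lB; split_ifs <;> omega
      have hlBq : 1 ≤ lB a' b' m' M' := by unfold lB; split_ifs <;> omega
      have hminp := pair_min (show b - a - 1 < b - a + lB a b m M - 1 by omega)
      have hmaxp := pair_max (show b - a - 1 < b - a + lB a b m M - 1 by omega)
      have hminq := pair_min (show b' - a' - 1 < b' - a' + lB a' b' m' M' - 1 by omega)
      have hmaxq := pair_max (show b' - a' - 1 < b' - a' + lB a' b' m' M' - 1 by omega)
      rw [hqasc] at hpasc
      have hmin_eq : b - a - 1 = b' - a' - 1 := by rw [← hminp, ← hminq, hpasc]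
      have hmax_eq : b - a + lB a b m M - 1 = b' - a' + lB a' b' m' M' - 1 := by
        rw [← hmaxp, ← hmaxq, hpasc]
      rw [hq0] at hp0
      have hb : b = b' := by omega
      subst hb
      have ha : a = a' := by omega
      subst ha
      have hlB_eq : lB a b m M = lB a b m' M' := by omega
      rw [hqM] at hpM
      have hMM : M = M' := hpM.symm
      rw [hlB_eq] at hpm
      rw [hqm] at hpm
      have hmm : m = m' := hpm.symm
      subst hMM
      subst hmm
      rfl

/-- Gauss sums in ℚ -/
lemma q0 : ∀ N : ℕ, ∑ x ∈ Finset.range N, (x:ℚ) = N*(N-1)/2 := by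
  intro N
  induction N with
  | zero => simp
  | succ N ih => rw [Finset.sum_range_succ, ih]; push_cast; ring

lemma q1 : ∀ M : ℕ, ∑ b ∈ Finset.Icc 1 M, (b:ℚ) = M*(M+1)/2 := by
  intro M
  induction M with
  | zero => simp
  | succ M ih => rw [Finset.sum_Icc_succ_top (by omega), ih]; push_cast; ring

lemma q2 : ∀ M : ℕ, ∑ b ∈ Finset.Icc 1 M, (b:ℚ)^2 = M*(M+1)*(2*M+1)/6 := by
  intro M
  induction M with
  | zero => simp
  | succ M ih => rw [Finset.sum_Icc_succ_top (by omega), ih]; push_cast; ring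

lemma qMid (M : ℕ) :
    ∑ b ∈ Finset.Icc 1 M, ((b:ℚ) * ((M:ℚ)+1-b) + b*(b-1)/2)
      = ((M:ℚ)+1)*M*(2*M+1)/6 := by
  have hterm : ∀ b : ℕ, (b:ℚ) * ((M:ℚ)+1-b) + b*(b-1)/2
      = ((M:ℚ)+1/2) * b - (b:ℚ)^2/2 := by intro b; ring
  rw [Finset.sum_congr rfl (fun b _ => hterm b)]
  rw [Finset.sum_sub_distrib, ← Finset.mul_sum, q1 M]
  have : ∑ b ∈ Finset.Icc 1 M, (b:ℚ)^2/2 = (∑ b ∈ Finset.Icc 1 M, (b:ℚ)^2)/2 := by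
    rw [Finset.sum_div]
  rw [this, q2 M]
  ring

lemma q_outer : ∀ N : ℕ, ∑ M ∈ Finset.range N, ((M:ℚ)+1)*M*(2*M+1)/6
    = ((N:ℚ)+1)*N^2*(N-1)/12 := by
  intro N
  induction N with
  | zero => simp
  | succ N ih => rw [Finset.sum_range_succ, ih]; push_cast; ring

lemma P1_card (hn : 1 ≤ n) : ((P1 n).card : ℚ) = (n:ℚ) * ((n:ℚ)-1)/2 := by
  rw [P1, Finset.card_sigma]
  push_cast [Finset.card_range]
  have hins : Finset.range n = insert 0 (Finset.Ico 1 n) := by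
    ext x; simp only [Finset.mem_range, Finset.mem_insert, Finset.mem_Ico]; omega
  have h0 : (0:ℕ) ∉ Finset.Ico 1 n := by simp
  have := q0 n
  rw [hins, Finset.sum_insert h0] at this
  push_cast at this
  linarith [this]

lemma inner_a_card {M b a : ℕ} (hab : a < b) (hbM : b ≤ M) :
    ((Finset.range (M+1)) \ (Finset.Ico a b)).card = M + 1 - (b - a) := by
  have hsub : Finset.Ico a b ⊆ Finset.range (M+1) := by
    intro x hx
    simp only [Finset.mem_Ico] at hx
    exact Finset.mem_range.mpr (by omega)
  rw [Finset.card_sdiff_of_subset hsub, Finset.card_range, Nat.card_Ico]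

lemma inner_b_sum {M b : ℕ} (h1 : 1 ≤ b) (hbM : b ≤ M) :
    (∑ a ∈ Finset.range b, (((Finset.range (M+1)) \ (Finset.Ico a b)).card : ℚ))
      = (b:ℚ) * ((M:ℚ)+1-b) + (b:ℚ)*((b:ℚ)-1)/2 := by
  have hterm : ∀ a ∈ Finset.range b,
      (((Finset.range (M+1)) \ (Finset.Ico a b)).card : ℚ) = ((M:ℚ)+1-(b:ℚ)) + (a:ℚ) := by
    intro a ha
    have ha' := Finset.mem_range.mp ha
    rw [inner_a_card ha' hbM]
    have he : ((M + 1 - (b - a) : ℕ) : ℚ) = ((M:ℚ)+1-(b:ℚ)) + (a:ℚ) := by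
      have h2 : M + 1 - (b - a) = (M + 1 - b) + a := by omega
      rw [h2, Nat.cast_add, Nat.cast_sub (show b ≤ M + 1 by omega)]
      push_cast
      ring
    rw [he]
  rw [Finset.sum_congr rfl hterm, Finset.sum_add_distrib, Finset.sum_const,
    Finset.card_range, q0 b, nsmul_eq_mul]
  try ring

lemma level2 (M : ℕ) :
    ((((Finset.Icc 1 M).sigma fun b => (Finset.range b).sigma fun a =>
      (Finset.range (M+1)) \ (Finset.Ico a b))).card : ℚ)
      = ((M:ℚ)+1)*M*(2*M+1)/6 := by
  rw [Finset.card_sigma]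
  push_cast
  have step : ∀ b ∈ Finset.Icc 1 M,
      (((Finset.range b).sigma fun a => (Finset.range (M+1)) \ (Finset.Ico a b)).card : ℚ)
        = (b:ℚ) * ((M:ℚ)+1-b) + (b:ℚ)*((b:ℚ)-1)/2 := by
    intro b hb
    simp only [Finset.mem_Icc] at hb
    rw [Finset.card_sigma]
    push_cast
    exact inner_b_sum hb.1 hb.2
  rw [Finset.sum_congr rfl step]
  exact qMid M

lemma P2_card (hn : 1 ≤ n) :
    ((P2 n).card : ℚ) = (n:ℚ) * ((n:ℚ)-1)^2 * ((n:ℚ)-2) / 12 := by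
  rw [P2, Finset.card_sigma]
  push_cast
  rw [Finset.sum_congr rfl (fun M _ => level2 M), q_outer (n-1)]
  have : ((n - 1 : ℕ) : ℚ) = (n:ℚ) - 1 := by
    push_cast [Nat.cast_sub hn]; ring
  rw [this]
  ring

theorem main (n : ℕ) (hn : 1 ≤ n) :
    ∑ σ ∈ Finset.univ.filter (fun σ : Equiv.Perm (Fin n) => Avoids312 σ ∧ Avoids1234 σ),
        (lis σ : ℚ)
      = ((n : ℚ) ^ 4 - 4 * n ^ 3 + 9 * n ^ 2 - 6 * n + 4) / 4 := by
  classical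
  have hiff : ∀ σ : Equiv.Perm (Fin n),
      (Avoids312 σ ∧ Avoids1234 σ) ↔ (Avoids312 σ ∧ (ascN σ).card ≤ 2) := by
    intro σ
    constructor
    · rintro ⟨h1, h2⟩
      refine ⟨h1, ?_⟩
      have e1 := lis_eq hn (av312N_of h1)
      have e2 := (avoids1234_iff σ).mp h2
      omega
    · rintro ⟨h1, h2⟩
      refine ⟨h1, ?_⟩
      rw [avoids1234_iff σ]
      have e1 := lis_eq hn (av312N_of h1)
      omega
  rw [Finset.filter_congr (fun σ _ => hiff σ)]
  set S := Finset.univ.filter (fun σ : Equiv.Perm (Fin n) =>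
    Avoids312 σ ∧ (ascN σ).card ≤ 2) with hS
  set S0 := Finset.univ.filter (fun σ : Equiv.Perm (Fin n) =>
    Avoids312 σ ∧ (ascN σ).card = 0) with hS0
  set S1 := Finset.univ.filter (fun σ : Equiv.Perm (Fin n) =>
    Avoids312 σ ∧ (ascN σ).card = 1) with hS1
  set S2 := Finset.univ.filter (fun σ : Equiv.Perm (Fin n) =>
    Avoids312 σ ∧ (ascN σ).card = 2) with hS2
  have hsum0 : ∑ σ ∈ S, (lis σ : ℚ) = ∑ σ ∈ S, (((ascN σ).card : ℚ) + 1) := by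
    apply Finset.sum_congr rfl
    intro σ hσ
    rw [hS, Finset.mem_filter] at hσ
    rw [lis_eq hn (av312N_of hσ.2.1)]
    push_cast
    ring
  rw [hsum0]
  have hsplit : S = (S0 ∪ S1) ∪ S2 := by
    ext σ
    simp only [hS, hS0, hS1, hS2, Finset.mem_filter, Finset.mem_union, Finset.mem_univ,
      true_and]
    constructor
    · rintro ⟨h1, h2⟩
      have : (ascN σ).card = 0 ∨ (ascN σ).card = 1 ∨ (ascN σ).card = 2 := by omega
      tauto
    · rintro ((⟨h1, h2⟩ | ⟨h1, h2⟩) | ⟨h1, h2⟩) <;> exact ⟨h1, by omega⟩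
  have hd01 : Disjoint S0 S1 := by
    rw [Finset.disjoint_left]
    intro σ h1 h2
    rw [hS0, Finset.mem_filter] at h1
    rw [hS1, Finset.mem_filter] at h2
    omega
  have hd012 : Disjoint (S0 ∪ S1) S2 := by
    rw [Finset.disjoint_left]
    intro σ h1 h2
    rw [hS2, Finset.mem_filter] at h2
    rw [Finset.mem_union, hS0, hS1, Finset.mem_filter, Finset.mem_filter] at h1
    rcases h1 with h1 | h1 <;> omega
  rw [hsplit, Finset.sum_union hd012, Finset.sum_union hd01]
  have e0 : ∑ σ ∈ S0, (((ascN σ).card : ℚ) + 1) = (S0.card : ℚ) * 1 := by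
    have hc : ∀ σ ∈ S0, (((ascN σ).card : ℚ) + 1) = (1 : ℚ) := by
      intro σ hσ
      rw [hS0, Finset.mem_filter] at hσ
      rw [hσ.2.2]
      norm_num
    rw [Finset.sum_congr rfl hc, Finset.sum_const, nsmul_eq_mul]
  have e1 : ∑ σ ∈ S1, (((ascN σ).card : ℚ) + 1) = (S1.card : ℚ) * 2 := by
    have hc : ∀ σ ∈ S1, (((ascN σ).card : ℚ) + 1) = (2 : ℚ) := by
      intro σ hσ
      rw [hS1, Finset.mem_filter] at hσ
      rw [hσ.2.2]
      norm_num
    rw [Finset.sum_congr rfl hc, Finset.sum_const, nsmul_eq_mul]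
  have e2 : ∑ σ ∈ S2, (((ascN σ).card : ℚ) + 1) = (S2.card : ℚ) * 3 := by
    have hc : ∀ σ ∈ S2, (((ascN σ).card : ℚ) + 1) = (3 : ℚ) := by
      intro σ hσ
      rw [hS2, Finset.mem_filter] at hσ
      rw [hσ.2.2]
      norm_num
    rw [Finset.sum_congr rfl hc, Finset.sum_const, nsmul_eq_mul]
  rw [e0, e1, e2]
  rw [hS0, card_asc0 hn]
  rw [hS1, card_asc1 hn]
  rw [hS2, card_asc2 hn]
  rw [P1_card hn, P2_card hn]
  push_cast
  field_simp
  ring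

end Stmt15

/-- the sum of `L(σ)` over `S_n(312,1234)` equals `(n⁴-4n³+9n²-6n+4)/4`;
equivalently the expectation is `3(n⁴-4n³+9n²-6n+4)/(n⁴-4n³+11n²-8n+12)`. -/
theorem stmt_15 (n : ℕ) (hn : 1 ≤ n) :
    ∑ σ ∈ Finset.univ.filter (fun σ : Equiv.Perm (Fin n) => Avoids312 σ ∧ Avoids1234 σ),
        (lis σ : ℚ)
      = ((n : ℚ) ^ 4 - 4 * n ^ 3 + 9 * n ^ 2 - 6 * n + 4) / 4 := by
  exact Stmt15.main n hn
end

section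
/- For every n ≥ 1, the number of permutations of {1,...,n} avoiding both 312 and 1243 equals (n-1)·2^{n-2} + 1. -/
section PatternDev
open Equiv Finset

def Inc {n : ℕ} (σ : Perm (Fin n)) : Prop := ∀ i j : Fin n, i < j → σ i < σ j
def Dec {n : ℕ} (σ : Perm (Fin n)) : Prop := ∀ i j : Fin n, i < j → σ j < σ i

section embed
variable {a b : ℕ}

def embedFun (α : Perm (Fin a)) (β : Perm (Fin b)) (i : Fin (a + b + 1)) : Fin (a + b + 1) :=
  if h : i.1 < a then ⟨(α ⟨i.1, h⟩).1 + 1, by have := (α ⟨i.1, h⟩).2; omega⟩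
  else if h2 : i.1 = a then ⟨0, by omega⟩
  else ⟨(β ⟨i.1 - a - 1, by have := i.2; omega⟩).1 + a + 1, by
    have := (β ⟨i.1 - a - 1, by have := i.2; omega⟩).2; omega⟩

variable (α : Perm (Fin a)) (β : Perm (Fin b))

lemma embedFun_lt' (i : Fin (a + b + 1)) (i' : Fin a) (h : i.1 = i'.1) :
    (embedFun α β i).1 = (α i').1 + 1 := by
  have h1 : i.1 < a := by have := i'.2; omega
  simp only [embedFun, dif_pos h1]
  have : (⟨i.1, h1⟩ : Fin a) = i' := Fin.ext h
  rw [this]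

lemma embedFun_eq' (i : Fin (a + b + 1)) (h : i.1 = a) : (embedFun α β i).1 = 0 := by
  simp [embedFun, h]

lemma embedFun_gt' (i : Fin (a + b + 1)) (i' : Fin b) (h : i.1 = a + 1 + i'.1) :
    (embedFun α β i).1 = (β i').1 + a + 1 := by
  have h1 : ¬ i.1 < a := by omega
  have h2 : ¬ i.1 = a := by omega
  simp only [embedFun, dif_neg h1, dif_neg h2]
  have : (⟨i.1 - a - 1, by have := i.2; omega⟩ : Fin b) = i' := Fin.ext (by simp; omega)
  rw [this]

lemma embedFun_inj : Function.Injective (embedFun α β) := by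
  intro i j hij
  have hv := congrArg Fin.val hij
  rcases Nat.lt_trichotomy i.1 a with hi|hi|hi <;> rcases Nat.lt_trichotomy j.1 a with hj|hj|hj
  · rw [embedFun_lt' α β i ⟨i.1, hi⟩ rfl, embedFun_lt' α β j ⟨j.1, hj⟩ rfl] at hv
    have : (⟨i.1, hi⟩ : Fin a) = ⟨j.1, hj⟩ := α.injective (Fin.ext (by omega))
    exact Fin.ext (by simpa [Fin.ext_iff] using this)
  · rw [embedFun_lt' α β i ⟨i.1, hi⟩ rfl, embedFun_eq' α β j hj] at hv; omega
  · rw [embedFun_lt' α β i ⟨i.1, hi⟩ rfl, embedFun_gt' α β j ⟨j.1 - a - 1, by have := j.2; omega⟩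
      (by simp; omega)] at hv
    have := (α ⟨i.1, hi⟩).2; omega
  · rw [embedFun_eq' α β i hi, embedFun_lt' α β j ⟨j.1, hj⟩ rfl] at hv; omega
  · exact Fin.ext (by omega)
  · rw [embedFun_eq' α β i hi, embedFun_gt' α β j ⟨j.1 - a - 1, by have := j.2; omega⟩
      (by simp; omega)] at hv; omega
  · rw [embedFun_gt' α β i ⟨i.1 - a - 1, by have := i.2; omega⟩ (by simp; omega),
      embedFun_lt' α β j ⟨j.1, hj⟩ rfl] at hv
    have := (α ⟨j.1, hj⟩).2; omega
  · rw [embedFun_gt' α β i ⟨i.1 - a - 1, by have := i.2; omega⟩ (by simp; omega),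
      embedFun_eq' α β j hj] at hv; omega
  · rw [embedFun_gt' α β i ⟨i.1 - a - 1, by have := i.2; omega⟩ (by simp; omega),
      embedFun_gt' α β j ⟨j.1 - a - 1, by have := j.2; omega⟩ (by simp; omega)] at hv
    have : (⟨i.1 - a - 1, by have := i.2; omega⟩ : Fin b)
        = ⟨j.1 - a - 1, by have := j.2; omega⟩ := β.injective (Fin.ext (by omega))
    simp only [Fin.mk.injEq] at this
    exact Fin.ext (by omega)

noncomputable def embedPerm : Perm (Fin (a + b + 1)) :=
  Equiv.ofBijective _ (Finite.injective_iff_bijective.mp (embedFun_inj α β))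

lemma embedPerm_lt' (i : Fin (a + b + 1)) (i' : Fin a) (h : i.1 = i'.1) :
    (embedPerm α β i).1 = (α i').1 + 1 := embedFun_lt' α β i i' h

lemma embedPerm_eq' (i : Fin (a + b + 1)) (h : i.1 = a) :
    (embedPerm α β i).1 = 0 := embedFun_eq' α β i h

lemma embedPerm_gt' (i : Fin (a + b + 1)) (i' : Fin b) (h : i.1 = a + 1 + i'.1) :
    (embedPerm α β i).1 = (β i').1 + a + 1 := embedFun_gt' α β i i' h

section iffs
variable {a b : ℕ} (α : Perm (Fin a)) (β : Perm (Fin b))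

local notation "E" => embedPerm α β

lemma embed_A312 (hα : Avoids312 α) (hβ : Avoids312 β) : Avoids312 E := by
  rintro ⟨i, j, k, hij, hjk, h1, h2⟩
  rw [Fin.lt_def] at hij hjk h1 h2
  rcases Nat.lt_trichotomy i.1 a with hi|hi|hi
  · have vi := embedPerm_lt' α β i ⟨i.1, hi⟩ rfl
    have bi := (α ⟨i.1, hi⟩).2
    rcases Nat.lt_trichotomy j.1 a with hj|hj|hj
    · have vj := embedPerm_lt' α β j ⟨j.1, hj⟩ rfl
      rcases Nat.lt_trichotomy k.1 a with hk|hk|hk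
      · have vk := embedPerm_lt' α β k ⟨k.1, hk⟩ rfl
        exact hα ⟨⟨i.1, hi⟩, ⟨j.1, hj⟩, ⟨k.1, hk⟩, Fin.mk_lt_mk.mpr (by omega),
          Fin.mk_lt_mk.mpr (by omega), Fin.lt_def.mpr (by omega), Fin.lt_def.mpr (by omega)⟩
      · have vk := embedPerm_eq' α β k hk
        have bj := (α ⟨j.1, hj⟩).2; omega
      · have vk := embedPerm_gt' α β k ⟨k.1 - a - 1, by have := k.2; omega⟩ (by simp; omega)
        omega
    · have vj := embedPerm_eq' α β j hj
      have hk : a < k.1 := by omega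
      have vk := embedPerm_gt' α β k ⟨k.1 - a - 1, by have := k.2; omega⟩ (by simp; omega)
      omega
    · have vj := embedPerm_gt' α β j ⟨j.1 - a - 1, by have := j.2; omega⟩ (by simp; omega)
      have hk : a < k.1 := by omega
      have vk := embedPerm_gt' α β k ⟨k.1 - a - 1, by have := k.2; omega⟩ (by simp; omega)
      omega
  · have vi := embedPerm_eq' α β i hi
    have hk : a < k.1 := by omega
    have vk := embedPerm_gt' α β k ⟨k.1 - a - 1, by have := k.2; omega⟩ (by simp; omega)
    omega
  · have hj : a < j.1 := by omega
    have hk : a < k.1 := by omega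
    have vi := embedPerm_gt' α β i ⟨i.1 - a - 1, by have := i.2; omega⟩ (by simp; omega)
    have vj := embedPerm_gt' α β j ⟨j.1 - a - 1, by have := j.2; omega⟩ (by simp; omega)
    have vk := embedPerm_gt' α β k ⟨k.1 - a - 1, by have := k.2; omega⟩ (by simp; omega)
    exact hβ ⟨⟨i.1 - a - 1, by have := i.2; omega⟩, ⟨j.1 - a - 1, by have := j.2; omega⟩,
      ⟨k.1 - a - 1, by have := k.2; omega⟩, Fin.mk_lt_mk.mpr (by omega),
      Fin.mk_lt_mk.mpr (by omega), Fin.lt_def.mpr (by omega), Fin.lt_def.mpr (by omega)⟩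

lemma embed_A1243 (hα : Avoids1243 α) (hβ : Avoids132 β) (hd : Dec α ∨ Inc β) :
    Avoids1243 E := by
  rintro ⟨i, j, k, l, hij, hjk, hkl, h1, h2, h3⟩
  rw [Fin.lt_def] at hij hjk hkl h1 h2 h3
  rcases Nat.lt_trichotomy i.1 a with hi|hi|hi
  · have vi := embedPerm_lt' α β i ⟨i.1, hi⟩ rfl
    have bi := (α ⟨i.1, hi⟩).2
    rcases Nat.lt_trichotomy j.1 a with hj|hj|hj
    · have vj := embedPerm_lt' α β j ⟨j.1, hj⟩ rfl
      have bj := (α ⟨j.1, hj⟩).2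
      rcases Nat.lt_trichotomy k.1 a with hk|hk|hk
      · have vk := embedPerm_lt' α β k ⟨k.1, hk⟩ rfl
        have bk := (α ⟨k.1, hk⟩).2
        rcases Nat.lt_trichotomy l.1 a with hl|hl|hl
        · have vl := embedPerm_lt' α β l ⟨l.1, hl⟩ rfl
          exact hα ⟨⟨i.1, hi⟩, ⟨j.1, hj⟩, ⟨k.1, hk⟩, ⟨l.1, hl⟩, Fin.mk_lt_mk.mpr (by omega),
            Fin.mk_lt_mk.mpr (by omega), Fin.mk_lt_mk.mpr (by omega),
            Fin.lt_def.mpr (by omega), Fin.lt_def.mpr (by omega), Fin.lt_def.mpr (by omega)⟩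
        · have vl := embedPerm_eq' α β l hl; omega
        · have vl := embedPerm_gt' α β l ⟨l.1 - a - 1, by have := l.2; omega⟩ (by simp; omega)
          omega
      · have vk := embedPerm_eq' α β k hk
        have hl : a < l.1 := by omega
        have vl := embedPerm_gt' α β l ⟨l.1 - a - 1, by have := l.2; omega⟩ (by simp; omega)
        omega
      · -- AABB
        have hl : a < l.1 := by omega
        have vk := embedPerm_gt' α β k ⟨k.1 - a - 1, by have := k.2; omega⟩ (by simp; omega)
        have vl := embedPerm_gt' α β l ⟨l.1 - a - 1, by have := l.2; omega⟩ (by simp; omega)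
        rcases hd with hd | hd
        · have := hd ⟨i.1, hi⟩ ⟨j.1, hj⟩ (Fin.mk_lt_mk.mpr (by omega))
          rw [Fin.lt_def] at this; omega
        · have := hd ⟨k.1 - a - 1, by have := k.2; omega⟩ ⟨l.1 - a - 1, by have := l.2; omega⟩
            (Fin.mk_lt_mk.mpr (by omega))
          rw [Fin.lt_def] at this; omega
    · have vj := embedPerm_eq' α β j hj; omega
    · -- ABBB
      have hk : a < k.1 := by omega
      have hl : a < l.1 := by omega
      have vj := embedPerm_gt' α β j ⟨j.1 - a - 1, by have := j.2; omega⟩ (by simp; omega)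
      have vk := embedPerm_gt' α β k ⟨k.1 - a - 1, by have := k.2; omega⟩ (by simp; omega)
      have vl := embedPerm_gt' α β l ⟨l.1 - a - 1, by have := l.2; omega⟩ (by simp; omega)
      exact hβ ⟨⟨j.1 - a - 1, by have := j.2; omega⟩, ⟨k.1 - a - 1, by have := k.2; omega⟩,
        ⟨l.1 - a - 1, by have := l.2; omega⟩, Fin.mk_lt_mk.mpr (by omega),
        Fin.mk_lt_mk.mpr (by omega), Fin.lt_def.mpr (by omega), Fin.lt_def.mpr (by omega)⟩
  · -- MBBB
    have hj : a < j.1 := by omega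
    have hk : a < k.1 := by omega
    have hl : a < l.1 := by omega
    have vj := embedPerm_gt' α β j ⟨j.1 - a - 1, by have := j.2; omega⟩ (by simp; omega)
    have vk := embedPerm_gt' α β k ⟨k.1 - a - 1, by have := k.2; omega⟩ (by simp; omega)
    have vl := embedPerm_gt' α β l ⟨l.1 - a - 1, by have := l.2; omega⟩ (by simp; omega)
    exact hβ ⟨⟨j.1 - a - 1, by have := j.2; omega⟩, ⟨k.1 - a - 1, by have := k.2; omega⟩,
      ⟨l.1 - a - 1, by have := l.2; omega⟩, Fin.mk_lt_mk.mpr (by omega),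
      Fin.mk_lt_mk.mpr (by omega), Fin.lt_def.mpr (by omega), Fin.lt_def.mpr (by omega)⟩
  · -- BBBB : use 132 at (j,k,l)
    have hj : a < j.1 := by omega
    have hk : a < k.1 := by omega
    have hl : a < l.1 := by omega
    have vj := embedPerm_gt' α β j ⟨j.1 - a - 1, by have := j.2; omega⟩ (by simp; omega)
    have vk := embedPerm_gt' α β k ⟨k.1 - a - 1, by have := k.2; omega⟩ (by simp; omega)
    have vl := embedPerm_gt' α β l ⟨l.1 - a - 1, by have := l.2; omega⟩ (by simp; omega)
    exact hβ ⟨⟨j.1 - a - 1, by have := j.2; omega⟩, ⟨k.1 - a - 1, by have := k.2; omega⟩,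
      ⟨l.1 - a - 1, by have := l.2; omega⟩, Fin.mk_lt_mk.mpr (by omega),
      Fin.mk_lt_mk.mpr (by omega), Fin.lt_def.mpr (by omega), Fin.lt_def.mpr (by omega)⟩

lemma embed_A132 (hα : Avoids132 α) (hβ : Inc β) : Avoids132 E := by
  rintro ⟨i, j, k, hij, hjk, h1, h2⟩
  rw [Fin.lt_def] at hij hjk h1 h2
  rcases Nat.lt_trichotomy j.1 a with hj|hj|hj
  · have hi : i.1 < a := by omega
    have vi := embedPerm_lt' α β i ⟨i.1, hi⟩ rfl
    have vj := embedPerm_lt' α β j ⟨j.1, hj⟩ rfl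
    have bj := (α ⟨j.1, hj⟩).2
    rcases Nat.lt_trichotomy k.1 a with hk|hk|hk
    · have vk := embedPerm_lt' α β k ⟨k.1, hk⟩ rfl
      exact hα ⟨⟨i.1, hi⟩, ⟨j.1, hj⟩, ⟨k.1, hk⟩, Fin.mk_lt_mk.mpr (by omega),
        Fin.mk_lt_mk.mpr (by omega), Fin.lt_def.mpr (by omega), Fin.lt_def.mpr (by omega)⟩
    · have vk := embedPerm_eq' α β k hk; omega
    · have vk := embedPerm_gt' α β k ⟨k.1 - a - 1, by have := k.2; omega⟩ (by simp; omega)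
      omega
  · have vj := embedPerm_eq' α β j hj
    have hk : a < k.1 := by omega
    have vk := embedPerm_gt' α β k ⟨k.1 - a - 1, by have := k.2; omega⟩ (by simp; omega)
    omega
  · have hk : a < k.1 := by omega
    have vj := embedPerm_gt' α β j ⟨j.1 - a - 1, by have := j.2; omega⟩ (by simp; omega)
    have vk := embedPerm_gt' α β k ⟨k.1 - a - 1, by have := k.2; omega⟩ (by simp; omega)
    have := hβ ⟨j.1 - a - 1, by have := j.2; omega⟩ ⟨k.1 - a - 1, by have := k.2; omega⟩
      (Fin.mk_lt_mk.mpr (by omega))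
    rw [Fin.lt_def] at this; omega

-- reverse directions
lemma rev_A312α (h : Avoids312 E) : Avoids312 α := by
  rintro ⟨i, j, k, hij, hjk, h1, h2⟩
  rw [Fin.lt_def] at hij hjk h1 h2
  have vi := embedPerm_lt' α β ⟨i.1, by omega⟩ i rfl
  have vj := embedPerm_lt' α β ⟨j.1, by omega⟩ j rfl
  have vk := embedPerm_lt' α β ⟨k.1, by omega⟩ k rfl
  exact h ⟨⟨i.1, by omega⟩, ⟨j.1, by omega⟩, ⟨k.1, by omega⟩, Fin.mk_lt_mk.mpr (by omega),
    Fin.mk_lt_mk.mpr (by omega), Fin.lt_def.mpr (by omega), Fin.lt_def.mpr (by omega)⟩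

lemma rev_A1243α (h : Avoids1243 E) : Avoids1243 α := by
  rintro ⟨i, j, k, l, hij, hjk, hkl, h1, h2, h3⟩
  rw [Fin.lt_def] at hij hjk hkl h1 h2 h3
  have vi := embedPerm_lt' α β ⟨i.1, by omega⟩ i rfl
  have vj := embedPerm_lt' α β ⟨j.1, by omega⟩ j rfl
  have vk := embedPerm_lt' α β ⟨k.1, by omega⟩ k rfl
  have vl := embedPerm_lt' α β ⟨l.1, by omega⟩ l rfl
  exact h ⟨⟨i.1, by omega⟩, ⟨j.1, by omega⟩, ⟨k.1, by omega⟩, ⟨l.1, by omega⟩,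
    Fin.mk_lt_mk.mpr (by omega), Fin.mk_lt_mk.mpr (by omega), Fin.mk_lt_mk.mpr (by omega),
    Fin.lt_def.mpr (by omega), Fin.lt_def.mpr (by omega), Fin.lt_def.mpr (by omega)⟩

lemma rev_A312β (h : Avoids312 E) : Avoids312 β := by
  rintro ⟨i, j, k, hij, hjk, h1, h2⟩
  rw [Fin.lt_def] at hij hjk h1 h2
  have vi := embedPerm_gt' α β ⟨a + 1 + i.1, by omega⟩ i rfl
  have vj := embedPerm_gt' α β ⟨a + 1 + j.1, by omega⟩ j rfl
  have vk := embedPerm_gt' α β ⟨a + 1 + k.1, by omega⟩ k rfl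
  exact h ⟨⟨a + 1 + i.1, by omega⟩, ⟨a + 1 + j.1, by omega⟩, ⟨a + 1 + k.1, by omega⟩,
    Fin.mk_lt_mk.mpr (by omega), Fin.mk_lt_mk.mpr (by omega),
    Fin.lt_def.mpr (by omega), Fin.lt_def.mpr (by omega)⟩

lemma rev_A132β (h : Avoids1243 E) : Avoids132 β := by
  rintro ⟨i, j, k, hij, hjk, h1, h2⟩
  rw [Fin.lt_def] at hij hjk h1 h2
  have vm := embedPerm_eq' α β ⟨a, by omega⟩ rfl
  have vi := embedPerm_gt' α β ⟨a + 1 + i.1, by omega⟩ i rfl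
  have vj := embedPerm_gt' α β ⟨a + 1 + j.1, by omega⟩ j rfl
  have vk := embedPerm_gt' α β ⟨a + 1 + k.1, by omega⟩ k rfl
  exact h ⟨⟨a, by omega⟩, ⟨a + 1 + i.1, by omega⟩, ⟨a + 1 + j.1, by omega⟩,
    ⟨a + 1 + k.1, by omega⟩, Fin.mk_lt_mk.mpr (by omega), Fin.mk_lt_mk.mpr (by omega),
    Fin.mk_lt_mk.mpr (by omega), Fin.lt_def.mpr (by omega), Fin.lt_def.mpr (by omega),
    Fin.lt_def.mpr (by omega)⟩

lemma rev_A132α (h : Avoids132 E) : Avoids132 α := by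
  rintro ⟨i, j, k, hij, hjk, h1, h2⟩
  rw [Fin.lt_def] at hij hjk h1 h2
  have vi := embedPerm_lt' α β ⟨i.1, by omega⟩ i rfl
  have vj := embedPerm_lt' α β ⟨j.1, by omega⟩ j rfl
  have vk := embedPerm_lt' α β ⟨k.1, by omega⟩ k rfl
  exact h ⟨⟨i.1, by omega⟩, ⟨j.1, by omega⟩, ⟨k.1, by omega⟩, Fin.mk_lt_mk.mpr (by omega),
    Fin.mk_lt_mk.mpr (by omega), Fin.lt_def.mpr (by omega), Fin.lt_def.mpr (by omega)⟩

lemma ascent_of_not_dec (hd : ¬ Dec α) : ∃ i j : Fin a, i < j ∧ α i < α j := by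
  unfold Dec at hd
  push_neg at hd
  obtain ⟨i, j, hij, h⟩ := hd
  refine ⟨i, j, hij, ?_⟩
  rcases lt_trichotomy (α i) (α j) with h'|h'|h'
  · exact h'
  · exact absurd (α.injective h') hij.ne
  · exact absurd h' (not_lt.mpr h)

lemma descent_of_not_inc (hd : ¬ Inc β) : ∃ i j : Fin b, i < j ∧ β j < β i := by
  unfold Inc at hd
  push_neg at hd
  obtain ⟨i, j, hij, h⟩ := hd
  refine ⟨i, j, hij, ?_⟩
  rcases lt_trichotomy (β j) (β i) with h'|h'|h'
  · exact h'
  · exact absurd (β.injective h') hij.ne'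
  · exact absurd h' (not_lt.mpr h)

lemma rev_decinc (h : Avoids1243 E) : Dec α ∨ Inc β := by
  by_contra hc
  push_neg at hc
  obtain ⟨i, j, hij, hasc⟩ := ascent_of_not_dec α hc.1
  obtain ⟨k, l, hkl, hdesc⟩ := descent_of_not_inc β hc.2
  rw [Fin.lt_def] at hij hkl hasc hdesc
  have vi := embedPerm_lt' α β ⟨i.1, by omega⟩ i rfl
  have vj := embedPerm_lt' α β ⟨j.1, by omega⟩ j rfl
  have bj := (α j).2
  have vk := embedPerm_gt' α β ⟨a + 1 + k.1, by omega⟩ k rfl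
  have vl := embedPerm_gt' α β ⟨a + 1 + l.1, by omega⟩ l rfl
  exact h ⟨⟨i.1, by omega⟩, ⟨j.1, by omega⟩, ⟨a + 1 + k.1, by omega⟩, ⟨a + 1 + l.1, by omega⟩,
    Fin.mk_lt_mk.mpr (by omega), Fin.mk_lt_mk.mpr (by have := j.2; omega),
    Fin.mk_lt_mk.mpr (by omega), Fin.lt_def.mpr (by omega), Fin.lt_def.mpr (by omega),
    Fin.lt_def.mpr (by omega)⟩

lemma rev_incβ (h : Avoids132 E) : Inc β := by
  by_contra hc
  obtain ⟨k, l, hkl, hdesc⟩ := descent_of_not_inc β hc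
  rw [Fin.lt_def] at hkl hdesc
  have vm := embedPerm_eq' α β ⟨a, by omega⟩ rfl
  have vk := embedPerm_gt' α β ⟨a + 1 + k.1, by omega⟩ k rfl
  have vl := embedPerm_gt' α β ⟨a + 1 + l.1, by omega⟩ l rfl
  exact h ⟨⟨a, by omega⟩, ⟨a + 1 + k.1, by omega⟩, ⟨a + 1 + l.1, by omega⟩,
    Fin.mk_lt_mk.mpr (by omega), Fin.mk_lt_mk.mpr (by omega),
    Fin.lt_def.mpr (by omega), Fin.lt_def.mpr (by omega)⟩

lemma dec_avoids312 {m : ℕ} {σ : Perm (Fin m)} (h : Dec σ) : Avoids312 σ := by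
  rintro ⟨i, j, k, hij, hjk, h1, h2⟩
  exact absurd h1 (not_lt.mpr (h j k hjk).le)

lemma embed_S_iff :
    (Avoids312 E ∧ Avoids1243 E) ↔
      ((Avoids312 α ∧ Avoids1243 α) ∧ (Avoids312 β ∧ Avoids132 β) ∧ (Dec α ∨ Inc β)) := by
  constructor
  · rintro ⟨h1, h2⟩
    exact ⟨⟨rev_A312α α β h1, rev_A1243α α β h2⟩, ⟨rev_A312β α β h1, rev_A132β α β h2⟩,
      rev_decinc α β h2⟩
  · rintro ⟨⟨ha1, ha2⟩, ⟨hb1, hb2⟩, hd⟩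
    exact ⟨embed_A312 α β ha1 hb1, embed_A1243 α β ha2 hb2 hd⟩

lemma embed_T_iff :
    (Avoids312 E ∧ Avoids132 E) ↔ ((Avoids312 α ∧ Avoids132 α) ∧ Inc β) := by
  constructor
  · rintro ⟨h1, h2⟩
    exact ⟨⟨rev_A312α α β h1, rev_A132α α β h2⟩, rev_incβ α β h2⟩
  · rintro ⟨⟨ha1, ha2⟩, hb⟩
    have hb312 : Avoids312 β := by
      rintro ⟨i, j, k, hij, hjk, h1, h2⟩
      have := hb i k (hij.trans hjk)
      omega
    exact ⟨embed_A312 α β ha1 hb312, embed_A132 α β ha2 hb⟩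

end iffs

end embed

section decomp
variable {n : ℕ}

def castPerm {m k : ℕ} (h : m = k) (σ : Perm (Fin m)) : Perm (Fin k) :=
  (finCongr h).permCongr σ

lemma castPerm_val {m k : ℕ} (h : m = k) (σ : Perm (Fin m)) (x : Fin k) :
    ((castPerm h σ) x).1 = (σ ⟨x.1, by omega⟩).1 := by
  subst h
  simp [castPerm]

lemma zero_val_imp (σ : Perm (Fin (n+1))) (x : Fin (n+1)) (hx : (σ x).1 = 0) :
    x = σ.symm 0 := by
  have : σ x = 0 := Fin.ext (by simpa using hx)
  rw [← this, Equiv.symm_apply_apply]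

lemma symm_zero_val (σ : Perm (Fin (n+1))) : (σ (σ.symm 0)).1 = 0 := by
  rw [σ.apply_symm_apply]; rfl

lemma sep (σ : Perm (Fin (n+1))) (h312 : Avoids312 σ) (i j : Fin (n+1))
    (hi : i.1 ≤ (σ.symm 0).1) (hj : (σ.symm 0).1 < j.1) : (σ i).1 < (σ j).1 := by
  have hσp := symm_zero_val σ
  have hj0 : (σ j).1 ≠ 0 := fun h => by have := zero_val_imp σ j h; rw [this] at hj; omega
  rcases Nat.eq_or_lt_of_le hi with h' | hi'
  · have : i = σ.symm 0 := Fin.ext h'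
    rw [this, hσp]
    omega
  · by_contra hc
    have hne : (σ i).1 ≠ (σ j).1 := by
      intro h
      have := σ.injective (Fin.ext h)
      rw [this] at hi'
      omega
    have hlt : (σ j).1 < (σ i).1 := by omega
    exact h312 ⟨i, σ.symm 0, j, Fin.lt_def.mpr hi', Fin.lt_def.mpr hj,
      Fin.lt_def.mpr (by omega), Fin.lt_def.mpr hlt⟩

lemma val_le_of_le (σ : Perm (Fin (n+1))) (h312 : Avoids312 σ) (i : Fin (n+1))
    (hi : i.1 ≤ (σ.symm 0).1) : (σ i).1 ≤ (σ.symm 0).1 := by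
  have hsub : (Finset.Ioi (σ.symm 0)).image σ ⊆ Finset.Ioi (σ i) := by
    intro x hx
    simp only [Finset.mem_image, Finset.mem_Ioi] at hx ⊢
    obtain ⟨j, hj, rfl⟩ := hx
    exact Fin.lt_def.mpr (sep σ h312 i j hi (Fin.lt_def.mp hj))
  have hc := Finset.card_le_card hsub
  rw [Finset.card_image_of_injective _ σ.injective, Fin.card_Ioi, Fin.card_Ioi] at hc
  have h1 := (σ.symm 0).2
  have h2 := (σ i).2
  omega

lemma val_gt_of_gt (σ : Perm (Fin (n+1))) (h312 : Avoids312 σ) (j : Fin (n+1))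
    (hj : (σ.symm 0).1 < j.1) : (σ.symm 0).1 < (σ j).1 := by
  have hsub : (Finset.Iic (σ.symm 0)).image σ ⊆ Finset.Iio (σ j) := by
    intro x hx
    simp only [Finset.mem_image, Finset.mem_Iic, Finset.mem_Iio] at hx ⊢
    obtain ⟨i, hi, rfl⟩ := hx
    exact Fin.lt_def.mpr (sep σ h312 i j (Fin.le_def.mp hi) hj)
  have hc := Finset.card_le_card hsub
  rw [Finset.card_image_of_injective _ σ.injective, Fin.card_Iic, Fin.card_Iio] at hc
  omega

set_option maxHeartbeats 1600000 in
lemma decomp (σ : Perm (Fin (n+1))) (h312 : Avoids312 σ) :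
    ∃ (a : Fin (n+1)) (α : Perm (Fin a.1)) (β : Perm (Fin (n - a.1))),
      σ = castPerm (show a.1 + (n - a.1) + 1 = n + 1 from by have := a.2; omega)
        (embedPerm α β) := by
  have hσp := symm_zero_val σ
  set p := σ.symm 0 with hp
  have hval1 : ∀ i : Fin (n+1), i.1 < p.1 → 1 ≤ (σ i).1 ∧ (σ i).1 ≤ p.1 := by
    intro i hip
    refine ⟨?_, val_le_of_le σ h312 i hip.le⟩
    by_contra hc
    have := zero_val_imp σ i (by omega)
    rw [this] at hip
    omega
  have hval2 : ∀ j : Fin (n+1), p.1 < j.1 → p.1 + 1 ≤ (σ j).1 := by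
    intro j hj
    have := val_gt_of_gt σ h312 j hj
    omega
  set fα : Fin p.1 → Fin p.1 := fun i =>
    ⟨(σ ⟨i.1, by omega⟩).1 - 1, by
      have := hval1 ⟨i.1, by omega⟩ i.2; omega⟩ with hfα
  have hαinj : Function.Injective fα := by
    intro i j hij
    rw [hfα] at hij
    simp only [Fin.mk.injEq] at hij
    have h1 := hval1 ⟨i.1, by omega⟩ i.2
    have h2 := hval1 ⟨j.1, by omega⟩ j.2
    have : σ ⟨i.1, by omega⟩ = σ ⟨j.1, by omega⟩ := Fin.ext (by omega)
    have := σ.injective this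
    simp only [Fin.mk.injEq] at this
    exact Fin.ext this
  set α : Perm (Fin p.1) := Equiv.ofBijective _ (Finite.injective_iff_bijective.mp hαinj)
    with hα
  set fβ : Fin (n - p.1) → Fin (n - p.1) := fun j =>
    ⟨(σ ⟨p.1 + 1 + j.1, by have := j.2; omega⟩).1 - p.1 - 1, by
      have h1 := hval2 ⟨p.1 + 1 + j.1, by have := j.2; omega⟩ (by simp; omega)
      have h2 := (σ ⟨p.1 + 1 + j.1, by have := j.2; omega⟩).2
      omega⟩ with hfβ
  have hβinj : Function.Injective fβ := by
    intro i j hij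
    rw [hfβ] at hij
    simp only [Fin.mk.injEq] at hij
    have h1 := hval2 ⟨p.1 + 1 + i.1, by have := i.2; omega⟩ (by simp; omega)
    have h2 := hval2 ⟨p.1 + 1 + j.1, by have := j.2; omega⟩ (by simp; omega)
    have : σ ⟨p.1 + 1 + i.1, by have := i.2; omega⟩
        = σ ⟨p.1 + 1 + j.1, by have := j.2; omega⟩ := Fin.ext (by omega)
    have := σ.injective this
    simp only [Fin.mk.injEq] at this
    exact Fin.ext (by omega)
  set β : Perm (Fin (n - p.1)) := Equiv.ofBijective _ (Finite.injective_iff_bijective.mp hβinj)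
    with hβ
  refine ⟨⟨p.1, p.2⟩, α, β, ?_⟩
  apply Equiv.ext
  intro x
  apply Fin.ext
  rw [castPerm_val]
  rcases Nat.lt_trichotomy x.1 p.1 with hx|hx|hx
  · rw [embedPerm_lt' α β ⟨x.1, by omega⟩ ⟨x.1, hx⟩ rfl]
    have hv := hval1 ⟨x.1, by omega⟩ hx
    have h2 : (α ⟨x.1, hx⟩).1 = (σ ⟨x.1, by omega⟩).1 - 1 := rfl
    have h3 : (⟨x.1, by omega⟩ : Fin (n+1)) = x := Fin.ext rfl
    rw [h3] at hv
    rw [h2, h3]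
    omega
  · rw [embedPerm_eq' α β ⟨x.1, by omega⟩ hx]
    have h3 : x = p := Fin.ext hx
    rw [h3]
    omega
  · rw [embedPerm_gt' α β ⟨x.1, by omega⟩ ⟨x.1 - p.1 - 1, by have := x.2; omega⟩ (by simp; omega)]
    have h2 : (β ⟨x.1 - p.1 - 1, by have := x.2; omega⟩).1
        = (σ ⟨p.1 + 1 + (x.1 - p.1 - 1), by have := x.2; omega⟩).1 - p.1 - 1 := rfl
    have h3 : (⟨p.1 + 1 + (x.1 - p.1 - 1), by have := x.2; omega⟩ : Fin (n+1)) = x :=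
      Fin.ext (by simp; omega)
    rw [h2, h3]
    have hv2 := hval2 x hx
    omega

end decomp

section master
variable {n : ℕ}

lemma castPerm_rfl {m : ℕ} (σ : Perm (Fin m)) : castPerm rfl σ = σ := by
  apply Equiv.ext
  intro x
  apply Fin.ext
  rw [castPerm_val]

lemma castPerm_A312 {m k : ℕ} (h : m = k) (σ : Perm (Fin m)) :
    Avoids312 (castPerm h σ) ↔ Avoids312 σ := by
  subst h; rw [castPerm_rfl]

lemma castPerm_A1243 {m k : ℕ} (h : m = k) (σ : Perm (Fin m)) :
    Avoids1243 (castPerm h σ) ↔ Avoids1243 σ := by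
  subst h; rw [castPerm_rfl]

lemma castPerm_A132 {m k : ℕ} (h : m = k) (σ : Perm (Fin m)) :
    Avoids132 (castPerm h σ) ↔ Avoids132 σ := by
  subst h; rw [castPerm_rfl]

lemma castPerm_inj {m k : ℕ} (h : m = k) : Function.Injective (castPerm h) :=
  fun _ _ hh => (finCongr h).permCongr.injective hh

noncomputable def Emb (a : Fin (n+1)) (x : Perm (Fin a.1) × Perm (Fin (n - a.1))) :
    Perm (Fin (n+1)) :=
  castPerm (show a.1 + (n - a.1) + 1 = n + 1 from by have := a.2; omega) (embedPerm x.1 x.2)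

lemma Emb_symm_zero (a : Fin (n+1)) (x : Perm (Fin a.1) × Perm (Fin (n - a.1))) :
    ((Emb a x).symm 0).1 = a.1 := by
  have h0 : Emb a x ⟨a.1, a.2⟩ = 0 := by
    apply Fin.ext
    rw [show ((0 : Fin (n+1)) : ℕ) = 0 from rfl]
    rw [Emb, castPerm_val]
    exact embedPerm_eq' x.1 x.2 _ rfl
  rw [← h0, Equiv.symm_apply_apply]

lemma embedPerm_comp_inj {a b : ℕ} (α α' : Perm (Fin a)) (β β' : Perm (Fin b))
    (h : embedPerm α β = embedPerm α' β') : α = α' ∧ β = β' := by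
  constructor
  · apply Equiv.ext
    intro i
    apply Fin.ext
    have h1 := embedPerm_lt' α β ⟨i.1, by omega⟩ i rfl
    have h2 := embedPerm_lt' α' β' ⟨i.1, by omega⟩ i rfl
    rw [h] at h1
    omega
  · apply Equiv.ext
    intro i
    apply Fin.ext
    have h1 := embedPerm_gt' α β ⟨a + 1 + i.1, by omega⟩ i rfl
    have h2 := embedPerm_gt' α' β' ⟨a + 1 + i.1, by omega⟩ i rfl
    rw [h] at h1
    omega

lemma master (P : Perm (Fin (n+1)) → Prop) [DecidablePred P]
    (Q : ∀ a : Fin (n+1), Perm (Fin a.1) × Perm (Fin (n - a.1)) → Prop)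
    [∀ a, DecidablePred (Q a)]
    (hP : ∀ σ, P σ → Avoids312 σ)
    (hiff : ∀ a x, P (Emb a x) ↔ Q a x) :
    (Finset.univ.filter P).card = ∑ a : Fin (n+1), (Finset.univ.filter (Q a)).card := by
  classical
  have hF : Function.Bijective
      (fun s : (Σ a : Fin (n+1), {x : Perm (Fin a.1) × Perm (Fin (n - a.1)) // Q a x}) =>
        (⟨Emb s.1 s.2.1, (hiff s.1 s.2.1).mpr s.2.2⟩ : {σ : Perm (Fin (n+1)) // P σ})) := by
    constructor
    · rintro ⟨a, ⟨x, hx⟩⟩ ⟨a', ⟨x', hx'⟩⟩ h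
      simp only [Subtype.mk.injEq] at h
      have ha : a = a' := by
        have h1 := Emb_symm_zero a x
        have h2 := Emb_symm_zero a' x'
        rw [h] at h1
        exact Fin.ext (by omega)
      subst ha
      have hemb : embedPerm x.1 x.2 = embedPerm x'.1 x'.2 := castPerm_inj _ h
      obtain ⟨h1, h2⟩ := embedPerm_comp_inj x.1 x'.1 x.2 x'.2 hemb
      have : x = x' := Prod.ext h1 h2
      subst this
      rfl
    · rintro ⟨σ, hσ⟩
      obtain ⟨a, α, β, heq⟩ := decomp σ (hP σ hσ)
      refine ⟨⟨a, ⟨(α, β), ?_⟩⟩, ?_⟩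
      · exact (hiff a (α, β)).mp (by rw [show Emb a (α, β) = σ from heq.symm]; exact hσ)
      · exact Subtype.ext (by exact heq.symm)
  calc (Finset.univ.filter P).card = Fintype.card {σ : Perm (Fin (n+1)) // P σ} :=
        (Fintype.card_subtype P).symm
    _ = Fintype.card (Σ a : Fin (n+1), {x : Perm (Fin a.1) × Perm (Fin (n - a.1)) // Q a x}) :=
        (Fintype.card_congr (Equiv.ofBijective _ hF)).symm
    _ = ∑ a : Fin (n+1), Fintype.card {x : Perm (Fin a.1) × Perm (Fin (n - a.1)) // Q a x} :=
        Fintype.card_sigma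
    _ = ∑ a : Fin (n+1), (Finset.univ.filter (Q a)).card := by
        refine Finset.sum_congr rfl fun a _ => Fintype.card_subtype (Q a)

end master

section counting
open Finset

-- simple avoidance facts
lemma dec_avoids1243 {m : ℕ} {σ : Perm (Fin m)} (h : Dec σ) : Avoids1243 σ := by
  rintro ⟨i, j, k, l, hij, hjk, hkl, h1, h2, h3⟩
  exact absurd h1 (not_lt.mpr (h i j hij).le)

lemma dec_avoids132 {m : ℕ} {σ : Perm (Fin m)} (h : Dec σ) : Avoids132 σ := by
  rintro ⟨i, j, k, hij, hjk, h1, h2⟩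
  exact absurd h1 (not_lt.mpr (h i k (hij.trans hjk)).le)

lemma inc_avoids312 {m : ℕ} {σ : Perm (Fin m)} (h : Inc σ) : Avoids312 σ := by
  rintro ⟨i, j, k, hij, hjk, h1, h2⟩
  exact absurd h2 (not_lt.mpr (h i k (hij.trans hjk)).le)

lemma inc_avoids132 {m : ℕ} {σ : Perm (Fin m)} (h : Inc σ) : Avoids132 σ := by
  rintro ⟨i, j, k, hij, hjk, h1, h2⟩
  exact absurd h2 (not_lt.mpr (h j k hjk).le)

lemma inc_avoids1243 {m : ℕ} {σ : Perm (Fin m)} (h : Inc σ) : Avoids1243 σ := by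
  rintro ⟨i, j, k, l, hij, hjk, hkl, h1, h2, h3⟩
  exact absurd h3 (not_lt.mpr (h k l hkl).le)

lemma inc_one {m : ℕ} : Inc (1 : Perm (Fin m)) := fun i j hij => by simpa using hij

lemma dec_revPerm {m : ℕ} : Dec (Fin.revPerm : Perm (Fin m)) := fun i j hij => by
  simpa [Fin.rev_lt_rev] using hij

-- strictly monotone perm of Fin is the identity
lemma perm_le_of_strictMono {m : ℕ} (f : Fin m → Fin m) (h : StrictMono f) (i : Fin m) :
    i ≤ f i := by
  have h1 : (Finset.Iic i).image f ⊆ Finset.Iic (f i) := by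
    intro x hx
    simp only [Finset.mem_image, Finset.mem_Iic] at hx ⊢
    obtain ⟨y, hy, rfl⟩ := hx
    exact h.monotone hy
  have := Finset.card_le_card h1
  rw [Finset.card_image_of_injective _ h.injective] at this
  simp only [Fin.card_Iic] at this
  exact Fin.mk_le_of_le_val (by omega)

lemma inc_eq_one {m : ℕ} {σ : Perm (Fin m)} (h : Inc σ) : σ = 1 := by
  have hsm : StrictMono σ := fun i j hij => h i j hij
  have hsm' : StrictMono σ.symm := by
    intro i j hij
    rcases lt_trichotomy (σ.symm i) (σ.symm j) with h'|h'|h'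
    · exact h'
    · exact absurd (congrArg σ h') (by simpa using hij.ne)
    · exact absurd (hsm h') (by simpa using hij.le.not_gt)
  apply Equiv.ext
  intro i
  have h1 := perm_le_of_strictMono σ hsm i
  have h2 := perm_le_of_strictMono σ.symm hsm' (σ i)
  simp only [Equiv.symm_apply_apply] at h2
  simpa using le_antisymm h2 h1

lemma inc_iff_eq_one {m : ℕ} (σ : Perm (Fin m)) : Inc σ ↔ σ = 1 :=
  ⟨inc_eq_one, fun h => h ▸ inc_one⟩

lemma dec_iff_eq_rev {m : ℕ} (σ : Perm (Fin m)) : Dec σ ↔ σ = Fin.revPerm := by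
  constructor
  · intro h
    have hinc : Inc (Fin.revPerm.trans σ : Perm (Fin m)) := by
      intro i j hij
      exact h _ _ (by simpa [Fin.rev_lt_rev] using hij)
    have h1 : (Fin.revPerm.trans σ : Perm (Fin m)) = 1 := inc_eq_one hinc
    apply Equiv.ext
    intro i
    have := congrArg (fun τ : Perm (Fin m) => τ (Fin.revPerm i)) h1
    simpa using this
  · rintro rfl
    exact dec_revPerm

instance {m : ℕ} (σ : Perm (Fin m)) : Decidable (Inc σ) :=
  decidable_of_iff (∀ i j : Fin m, i < j → σ i < σ j) Iff.rfl

instance {m : ℕ} (σ : Perm (Fin m)) : Decidable (Dec σ) :=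
  decidable_of_iff (∀ i j : Fin m, i < j → σ j < σ i) Iff.rfl

lemma filter_inc_card {m : ℕ} :
    (univ.filter (fun σ : Perm (Fin m) => Inc σ)).card = 1 := by
  have : univ.filter (fun σ : Perm (Fin m) => Inc σ) = {1} := by
    ext σ
    simp [inc_iff_eq_one]
  rw [this, card_singleton]

lemma filter_dec_card {m : ℕ} :
    (univ.filter (fun σ : Perm (Fin m) => Dec σ)).card = 1 := by
  have : univ.filter (fun σ : Perm (Fin m) => Dec σ) = {Fin.revPerm} := by
    ext σ
    simp [dec_iff_eq_rev]
  rw [this, card_singleton]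

end counting

section cards
open Finset

def SCard (m : ℕ) : ℕ :=
  (Finset.univ.filter (fun σ : Equiv.Perm (Fin m) => Avoids312 σ ∧ Avoids1243 σ)).card

def TCard (m : ℕ) : ℕ :=
  (Finset.univ.filter (fun σ : Equiv.Perm (Fin m) => Avoids312 σ ∧ Avoids132 σ)).card

lemma one_avoids312 {m : ℕ} : Avoids312 (1 : Perm (Fin m)) :=
  inc_avoids312 inc_one

lemma one_avoids1243 {m : ℕ} : Avoids1243 (1 : Perm (Fin m)) :=
  inc_avoids1243 inc_one

lemma one_avoids132 {m : ℕ} : Avoids132 (1 : Perm (Fin m)) :=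
  inc_avoids132 inc_one

lemma SCard_pos (m : ℕ) : 1 ≤ SCard m := by
  rw [SCard]
  exact Finset.card_pos.mpr ⟨1, by
    simp only [Finset.mem_filter, Finset.mem_univ, true_and]
    exact ⟨one_avoids312, one_avoids1243⟩⟩

-- the card of the Q-set for the S-recursion
lemma cardQS (a b : ℕ) :
    (Finset.univ.filter (fun x : Perm (Fin a) × Perm (Fin b) =>
      (Avoids312 x.1 ∧ Avoids1243 x.1) ∧ (Avoids312 x.2 ∧ Avoids132 x.2)
        ∧ (Dec x.1 ∨ Inc x.2))).card
    = TCard b + (SCard a - 1) := by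
  have hsplit : Finset.univ.filter (fun x : Perm (Fin a) × Perm (Fin b) =>
      (Avoids312 x.1 ∧ Avoids1243 x.1) ∧ (Avoids312 x.2 ∧ Avoids132 x.2)
        ∧ (Dec x.1 ∨ Inc x.2))
      = Finset.univ.filter (fun x : Perm (Fin a) × Perm (Fin b) =>
          Dec x.1 ∧ (Avoids312 x.2 ∧ Avoids132 x.2))
        ∪ Finset.univ.filter (fun x : Perm (Fin a) × Perm (Fin b) =>
          ((Avoids312 x.1 ∧ Avoids1243 x.1) ∧ ¬ Dec x.1) ∧ Inc x.2) := by
    ext x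
    simp only [mem_filter, mem_union, mem_univ, true_and]
    constructor
    · rintro ⟨hS, hT, hd⟩
      by_cases hdec : Dec x.1
      · exact Or.inl ⟨hdec, hT⟩
      · exact Or.inr ⟨⟨hS, hdec⟩, hd.resolve_left hdec⟩
    · rintro (⟨hd, hT⟩ | ⟨⟨hS, hnd⟩, hi⟩)
      · exact ⟨⟨dec_avoids312 hd, dec_avoids1243 hd⟩, hT, Or.inl hd⟩
      · exact ⟨hS, ⟨inc_avoids312 hi, inc_avoids132 hi⟩, Or.inr hi⟩
  rw [hsplit, Finset.card_union_of_disjoint]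
  · have e1 : (Finset.univ.filter (fun x : Perm (Fin a) × Perm (Fin b) =>
        Dec x.1 ∧ (Avoids312 x.2 ∧ Avoids132 x.2))).card
        = (Finset.univ.filter (fun α : Perm (Fin a) => Dec α)).card
          * (Finset.univ.filter (fun β : Perm (Fin b) => Avoids312 β ∧ Avoids132 β)).card := by
      rw [← Finset.univ_product_univ,
        Finset.filter_product (fun α : Perm (Fin a) => Dec α)
          (fun β : Perm (Fin b) => Avoids312 β ∧ Avoids132 β), Finset.card_product]
    have e2 : (Finset.univ.filter (fun x : Perm (Fin a) × Perm (Fin b) =>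
        ((Avoids312 x.1 ∧ Avoids1243 x.1) ∧ ¬ Dec x.1) ∧ Inc x.2)).card
        = (Finset.univ.filter (fun α : Perm (Fin a) =>
            (Avoids312 α ∧ Avoids1243 α) ∧ ¬ Dec α)).card
          * (Finset.univ.filter (fun β : Perm (Fin b) => Inc β)).card := by
      rw [← Finset.univ_product_univ,
        Finset.filter_product (fun α : Perm (Fin a) => (Avoids312 α ∧ Avoids1243 α) ∧ ¬ Dec α)
          (fun β : Perm (Fin b) => Inc β), Finset.card_product]
    have e3 : (Finset.univ.filter (fun α : Perm (Fin a) =>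
        (Avoids312 α ∧ Avoids1243 α) ∧ ¬ Dec α)).card = SCard a - 1 := by
      have h4 : Finset.univ.filter (fun α : Perm (Fin a) => Avoids312 α ∧ Avoids1243 α)
          = Finset.univ.filter (fun α : Perm (Fin a) => Dec α)
            ∪ Finset.univ.filter (fun α : Perm (Fin a) =>
                (Avoids312 α ∧ Avoids1243 α) ∧ ¬ Dec α) := by
        ext α
        simp only [mem_filter, mem_union, mem_univ, true_and]
        constructor
        · intro hS
          by_cases hdec : Dec α
          · exact Or.inl hdec
          · exact Or.inr ⟨hS, hdec⟩
        · rintro (hd | ⟨hS, _⟩)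
          · exact ⟨dec_avoids312 hd, dec_avoids1243 hd⟩
          · exact hS
      have h5 : SCard a = 1 + (Finset.univ.filter (fun α : Perm (Fin a) =>
          (Avoids312 α ∧ Avoids1243 α) ∧ ¬ Dec α)).card := by
        rw [SCard, h4, Finset.card_union_of_disjoint, filter_dec_card]
        rw [Finset.disjoint_left]
        intro x hx hy
        simp only [mem_filter] at hx hy
        exact hy.2.2 hx.2
      omega
    rw [e1, e2, e3, filter_dec_card, filter_inc_card, one_mul, mul_one, TCard]
  · rw [Finset.disjoint_left]
    intro x hx hy
    simp only [mem_filter] at hx hy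
    exact hy.2.1.2 hx.2.1

lemma cardQT (a b : ℕ) :
    (Finset.univ.filter (fun x : Perm (Fin a) × Perm (Fin b) =>
      (Avoids312 x.1 ∧ Avoids132 x.1) ∧ Inc x.2)).card = TCard a := by
  rw [← Finset.univ_product_univ,
    Finset.filter_product (fun α : Perm (Fin a) => Avoids312 α ∧ Avoids132 α)
      (fun β : Perm (Fin b) => Inc β), Finset.card_product, filter_inc_card, mul_one, TCard]

end cards

section recurrences
open Finset

lemma SCard_rec (n : ℕ) :
    SCard (n+1) = ∑ a ∈ Finset.range (n+1), (TCard (n - a) + (SCard a - 1)) := by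
  have hiffS : ∀ (a : Fin (n+1)) (x : Perm (Fin a.1) × Perm (Fin (n - a.1))),
      (Avoids312 (Emb a x) ∧ Avoids1243 (Emb a x)) ↔
        ((Avoids312 x.1 ∧ Avoids1243 x.1) ∧ (Avoids312 x.2 ∧ Avoids132 x.2)
          ∧ (Dec x.1 ∨ Inc x.2)) := by
    intro a x
    unfold Emb
    rw [castPerm_A312, castPerm_A1243]
    exact embed_S_iff x.1 x.2
  rw [SCard]
  rw [master (fun σ : Perm (Fin (n+1)) => Avoids312 σ ∧ Avoids1243 σ)
    (fun a x => (Avoids312 x.1 ∧ Avoids1243 x.1) ∧ (Avoids312 x.2 ∧ Avoids132 x.2)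
      ∧ (Dec x.1 ∨ Inc x.2)) (fun σ h => h.1) hiffS]
  rw [show (∑ a : Fin (n+1), (Finset.univ.filter
      (fun x : Perm (Fin a.1) × Perm (Fin (n - a.1)) =>
        (Avoids312 x.1 ∧ Avoids1243 x.1) ∧ (Avoids312 x.2 ∧ Avoids132 x.2)
          ∧ (Dec x.1 ∨ Inc x.2))).card)
      = ∑ a : Fin (n+1), (TCard (n - a.1) + (SCard a.1 - 1)) from
    Finset.sum_congr rfl fun a _ => cardQS a.1 (n - a.1)]
  exact Fin.sum_univ_eq_sum_range (fun a => TCard (n - a) + (SCard a - 1)) (n+1)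

lemma TCard_rec (n : ℕ) :
    TCard (n+1) = ∑ a ∈ Finset.range (n+1), TCard a := by
  have hiffT : ∀ (a : Fin (n+1)) (x : Perm (Fin a.1) × Perm (Fin (n - a.1))),
      (Avoids312 (Emb a x) ∧ Avoids132 (Emb a x)) ↔
        ((Avoids312 x.1 ∧ Avoids132 x.1) ∧ Inc x.2) := by
    intro a x
    unfold Emb
    rw [castPerm_A312, castPerm_A132]
    exact embed_T_iff x.1 x.2
  rw [TCard]
  rw [master (fun σ : Perm (Fin (n+1)) => Avoids312 σ ∧ Avoids132 σ)
    (fun a x => (Avoids312 x.1 ∧ Avoids132 x.1) ∧ Inc x.2) (fun σ h => h.1) hiffT]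
  rw [show (∑ a : Fin (n+1), (Finset.univ.filter
      (fun x : Perm (Fin a.1) × Perm (Fin (n - a.1)) =>
        (Avoids312 x.1 ∧ Avoids132 x.1) ∧ Inc x.2)).card)
      = ∑ a : Fin (n+1), TCard a.1 from
    Finset.sum_congr rfl fun a _ => cardQT a.1 (n - a.1)]
  exact Fin.sum_univ_eq_sum_range (fun a => TCard a) (n+1)

end recurrences

section numerics
open Finset

lemma TCard_zero : TCard 0 = 1 := by
  rw [TCard]
  rw [Finset.filter_true_of_mem (fun σ _ => ⟨fun ⟨i, _⟩ => i.elim0, fun ⟨i, _⟩ => i.elim0⟩)]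
  simp [Finset.card_univ]

lemma SCard_zero : SCard 0 = 1 := by
  rw [SCard]
  rw [Finset.filter_true_of_mem (fun σ _ => ⟨fun ⟨i, _⟩ => i.elim0, fun ⟨i, _⟩ => i.elim0⟩)]
  simp [Finset.card_univ]

lemma TCard_pow (n : ℕ) : TCard (n+1) = 2^n := by
  induction n with
  | zero => rw [TCard_rec]; simpa using TCard_zero
  | succ n ih =>
    rw [TCard_rec, Finset.sum_range_succ, ← TCard_rec, ih, pow_succ]
    omega

lemma sumT (n : ℕ) : ∑ a ∈ Finset.range (n+1), TCard (n - a) = 2^n := by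
  have h1 : ∑ a ∈ Finset.range (n+1), TCard (n - a) = ∑ a ∈ Finset.range (n+1), TCard a := by
    simpa using Finset.sum_range_reflect TCard (n+1)
  rw [h1, ← TCard_rec, TCard_pow]

def Dsum (m : ℕ) : ℕ := ∑ a ∈ Finset.range m, (SCard a - 1)

lemma Dsum_succ (m : ℕ) : Dsum (m+1) = Dsum m + (SCard m - 1) := by
  rw [Dsum, Dsum, Finset.sum_range_succ]

lemma SCard_rec' (m : ℕ) : SCard (m+1) = 2^m + Dsum (m+1) := by
  rw [SCard_rec, Dsum, ← sumT m, ← Finset.sum_add_distrib]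

lemma Dsum_zero : Dsum 0 = 0 := rfl

lemma SCard_one : SCard 1 = 1 := by
  rw [SCard_rec' 0, Dsum_succ, Dsum_zero, SCard_zero]
  norm_num

lemma Dsum_claim (n : ℕ) : Dsum (n+2) + 2^(n+1) = (n+1) * 2^n + 1 := by
  induction n with
  | zero =>
    rw [show (0:ℕ)+2 = 1+1 from rfl, Dsum_succ, Dsum_succ, Dsum_zero, SCard_zero, SCard_one]
    norm_num
  | succ n ih =>
    show Dsum ((n+2)+1) + 2^((n+1)+1) = ((n+1)+1) * 2^(n+1) + 1
    rw [Dsum_succ (n+2)]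
    have hrec := SCard_rec' (n+1)
    have hpos := SCard_pos (n+2)
    have p1 : (2:ℕ)^(n+1) = 2 * 2^n := by rw [pow_succ]; ring
    have p2 : (2:ℕ)^(n+2) = 2 * 2^(n+1) := by rw [pow_succ]; ring
    have e1 : ((n+1)+1) * 2^(n+1) = (n+1) * 2^n + (n+1) * 2^n + 2^n + 2^n := by
      rw [pow_succ]; ring
    have hrec' : SCard (n+2) = 2^(n+1) + Dsum (n+2) := hrec
    omega

lemma SCard_closed (m : ℕ) : SCard m = (m - 1) * 2^(m - 2) + 1 := by
  match m with
  | 0 => simpa using SCard_zero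
  | 1 => rw [SCard_one]; norm_num
  | (k+2) =>
    have h1 := Dsum_claim k
    have h2 : SCard (k+2) = 2^(k+1) + Dsum (k+2) := SCard_rec' (k+1)
    have h3 : (k+2-1) * 2^(k+2-2) = (k+1) * 2^k := rfl
    omega

end numerics

end PatternDev

/-- `|S_n(312,1243)| = (n-1)·2^(n-2) + 1` for `n ≥ 1`. -/
theorem stmt_16 (n : ℕ) (hn : 1 ≤ n) :
    (Finset.univ.filter
        (fun σ : Equiv.Perm (Fin n) => Avoids312 σ ∧ Avoids1243 σ)).card
      = (n - 1) * 2 ^ (n - 2) + 1 := by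
  have h := SCard_closed n
  rwa [SCard] at h
end
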